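/- Theta-curve theorem (combinatorial form): Let n ≥ 3, let V be a finite set with |V| = n, and let f₁, f₂, f₃ be weak linking functions on V with f₁ + f₂ + f₃ = 0 (as functions on V³) and with some f_i nontrivial. Then, after possibly replacing each f_i by −f_i simultaneously, exactly one of the following holds. (A1) There are a vertex p ∈ V and pairwise disjoint sets I₁, I₂, I₃ (at most one of them empty) with I₁ ∪ I₂ ∪ I₃ = V − {p}, such that for each i, f_i is the star function pO_iI_i where O_i is the union of the other two sets I_j (and f_i = 0 if I_i = ∅). (A2) n ≥ 5 and there are distinct vertices p₁,p₂,p₃ ∈ V such that, with I = V − {p₁,p₂,p₃}, each f_i is the star function p_i{p_j,p_k}I, where {i,j,k} = {1,2,3}. -/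

import Mathlib

open scoped Classical

section Defs

variable {V : Type*} {W : Type*}

/-- A map `V³ → ℤ` alternating in its arguments. -/
def IsAlt (f : V → V → V → ℤ) : Prop :=
  (∀ a b c, f b a c = - f a b c) ∧ (∀ a b c, f a c b = - f a b c)

/-- The simplicial cocycle identity. -/
def IsCocycle (f : V → V → V → ℤ) : Prop :=
  ∀ a b c d, f b c d - f a c d + f a b d - f a b c = 0

/-- A linking function on `V`. -/
def IsLinkingFun (f : V → V → V → ℤ) : Prop := IsAlt f ∧ IsCocycle f

/-- A cycle in the complete graph on `V`: a list of at least 3 distinct vertices. -/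
def IsCycle (C : List V) : Prop := C.Nodup ∧ 3 ≤ C.length

/-- The value of `f` on a cycle, via the standard triangulation
`f(C) = ∑_{i=1}^{k-2} f(v₀, vᵢ, vᵢ₊₁)`. -/
def cycleVal (f : V → V → V → ℤ) : List V → ℤ
  | [] => 0
  | v :: rest => ∑ i ∈ Finset.range (rest.length - 1),
      f v (rest.getD i v) (rest.getD (i + 1) v)

/-- `f` is weak: `|f(C)| ≤ 1` for every cycle `C`. -/
def IsWeak (f : V → V → V → ℤ) : Prop :=
  ∀ C : List V, IsCycle C → |cycleVal f C| ≤ 1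

/-- `f` is nontrivial: `f(C) ≠ 0` for some cycle `C`. -/
def IsNontrivial (f : V → V → V → ℤ) : Prop :=
  ∃ C : List V, IsCycle C ∧ cycleVal f C ≠ 0

noncomputable def starEdge (O I : Set V) (x y : V) : ℤ :=
  (if x ∈ O ∧ y ∈ I then 1 else 0) - (if x ∈ I ∧ y ∈ O then 1 else 0)

/-- The star function `pOI`: the alternating function with value `1` on `(p,q,r)`
for `q ∈ O`, `r ∈ I`, and value `0` on triples not of this form up to reorientation. -/
noncomputable def starFun (p : V) (O I : Set V) (a b c : V) : ℤ :=
  (if a = p then starEdge O I b c else 0)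
    - (if b = p then starEdge O I a c else 0)
    + (if c = p then starEdge O I a b else 0)

/-- `({p}, O, I)` is an ordered partition of `V` into three nonempty parts. -/
def IsStarPartition (p : V) (O I : Set V) : Prop :=
  O.Nonempty ∧ I.Nonempty ∧ p ∉ O ∧ p ∉ I ∧ Disjoint O I ∧
    insert p (O ∪ I) = (Set.univ : Set V)

/-- A bilinking form between `V` and `W`. -/
def IsBilinking (lam : V → V → V → W → W → W → ℤ) : Prop :=
  (∀ u v w, IsLinkingFun (fun a b c => lam a b c u v w)) ∧
  (∀ a b c, IsLinkingFun (lam a b c))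

/-- The value of a bilinking form on a pair of cycles. -/
def biCycleVal (lam : V → V → V → W → W → W → ℤ) (C : List V) (D : List W) : ℤ :=
  cycleVal (fun a b c => cycleVal (lam a b c) D) C

/-- `K_V` and `K_W` are weakly linked under `lam`. -/
def WeaklyLinked (lam : V → V → V → W → W → W → ℤ) : Prop :=
  (∀ (C : List V) (D : List W), IsCycle C → IsCycle D → |biCycleVal lam C D| ≤ 1) ∧
  ∃ (C : List V) (D : List W), IsCycle C ∧ IsCycle D ∧ biCycleVal lam C D ≠ 0

end Defs

section Helpers

variable {V : Type*}

lemma alt_aab {f : V → V → V → ℤ} (hf : IsAlt f) (a c : V) : f a a c = 0 := by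
  have := hf.1 a a c; omega

lemma alt_abb {f : V → V → V → ℤ} (hf : IsAlt f) (a b : V) : f a b b = 0 := by
  have := hf.2 a b b; omega

lemma alt_aba {f : V → V → V → ℤ} (hf : IsAlt f) (a b : V) : f a b a = 0 := by
  have h := hf.2 a b a
  have h2 := alt_aab hf a b
  omega

lemma cycleVal_tri (f : V → V → V → ℤ) (a b c : V) :
    cycleVal f [a, b, c] = f a b c := by
  simp [cycleVal]

lemma cycleVal_quad (f : V → V → V → ℤ) (a b c d : V) :
    cycleVal f [a, b, c, d] = f a b c + f a c d := by
  simp [cycleVal, Finset.sum_range_succ]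

lemma cycleVal_pent (f : V → V → V → ℤ) (a b c d e : V) :
    cycleVal f [a, b, c, d, e] = f a b c + f a c d + f a d e := by
  simp [cycleVal, Finset.sum_range_succ]

lemma cycleVal_hex (f : V → V → V → ℤ) (a b c d e x : V) :
    cycleVal f [a, b, c, d, e, x] = f a b c + f a c d + f a d e + f a e x := by
  simp [cycleVal, Finset.sum_range_succ]

lemma isCycle_tri {a b c : V} (h1 : a ≠ b) (h2 : a ≠ c) (h3 : b ≠ c) :
    IsCycle [a, b, c] := by
  constructor
  · simp [h1, h2, h3]
  · simp

lemma isCycle_quad {a b c d : V} (h1 : a ≠ b) (h2 : a ≠ c) (h3 : a ≠ d)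
    (h4 : b ≠ c) (h5 : b ≠ d) (h6 : c ≠ d) : IsCycle [a, b, c, d] := by
  constructor
  · simp [h1, h2, h3, h4, h5, h6]
  · simp

lemma isCycle_pent {a b c d e : V} (h1 : a ≠ b) (h2 : a ≠ c) (h3 : a ≠ d) (h4 : a ≠ e)
    (h5 : b ≠ c) (h6 : b ≠ d) (h7 : b ≠ e) (h8 : c ≠ d) (h9 : c ≠ e) (h10 : d ≠ e) :
    IsCycle [a, b, c, d, e] := by
  constructor
  · simp [h1, h2, h3, h4, h5, h6, h7, h8, h9, h10]
  · simp

lemma isCycle_hex {a b c d e x : V} (h1 : a ≠ b) (h2 : a ≠ c) (h3 : a ≠ d) (h4 : a ≠ e)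
    (h5 : a ≠ x) (h6 : b ≠ c) (h7 : b ≠ d) (h8 : b ≠ e) (h9 : b ≠ x) (h10 : c ≠ d)
    (h11 : c ≠ e) (h12 : c ≠ x) (h13 : d ≠ e) (h14 : d ≠ x) (h15 : e ≠ x) :
    IsCycle [a, b, c, d, e, x] := by
  constructor
  · simp [h1, h2, h3, h4, h5, h6, h7, h8, h9, h10, h11, h12, h13, h14, h15]
  · simp

/-- negation of a linking function is a linking function -/
lemma lk_neg {f : V → V → V → ℤ} (hf : IsLinkingFun f) :
    IsLinkingFun (fun a b c => - f a b c) := by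
  obtain ⟨⟨h1, h2⟩, h3⟩ := hf
  refine ⟨⟨fun a b c => by simp [h1 a b c], fun a b c => by simp [h2 a b c]⟩,
    fun a b c d => by dsimp only; have := h3 a b c d; omega⟩

lemma cycleVal_neg (f : V → V → V → ℤ) (C : List V) :
    cycleVal (fun a b c => - f a b c) C = - cycleVal f C := by
  cases C with
  | nil => simp [cycleVal]
  | cons v rest => simp [cycleVal, Finset.sum_neg_distrib]

lemma weak_neg {f : V → V → V → ℤ} (hw : IsWeak f) :
    IsWeak (fun a b c => - f a b c) := by
  intro C hC
  rw [cycleVal_neg, abs_neg]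
  exact hw C hC

/-- a trivial alternating function with all triangle values 0 is 0 -/
lemma exists_triangle {f : V → V → V → ℤ} (hf : IsAlt f) (hnt : IsNontrivial f) :
    ∃ p q r : V, p ≠ q ∧ p ≠ r ∧ q ≠ r ∧ f p q r ≠ 0 := by
  obtain ⟨C, hC, hval⟩ := hnt
  cases C with
  | nil => simp [cycleVal] at hval
  | cons v rest =>
      rw [cycleVal] at hval
      obtain ⟨i, _, hi⟩ := Finset.exists_ne_zero_of_sum_ne_zero hval
      refine ⟨v, rest.getD i v, rest.getD (i+1) v, ?_, ?_, ?_, hi⟩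
      · intro h; rw [← h] at hi; exact hi (alt_aab hf _ _)
      · intro h; rw [← h] at hi; exact hi (alt_aba hf _ _)
      · intro h; rw [h] at hi; exact hi (alt_abb hf _ _)

lemma zero_of_trivial {f : V → V → V → ℤ} (hf : IsAlt f) (hnt : ¬ IsNontrivial f) :
    ∀ a b c, f a b c = 0 := by
  intro a b c
  by_cases hab : a = b
  · subst hab; exact alt_aab hf _ _
  by_cases hac : a = c
  · subst hac; exact alt_aba hf _ _
  by_cases hbc : b = c
  · subst hbc; exact alt_abb hf _ _
  by_contra h
  exact hnt ⟨[a, b, c], isCycle_tri hab hac hbc, by rwa [cycleVal_tri]⟩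

end Helpers

section StarHelpers

variable {V : Type*}

lemma starEdge_left_not {O I : Set V} {u : V} (hO : u ∉ O) (hI : u ∉ I) (v : V) :
    starEdge O I u v = 0 := by
  simp [starEdge, hO, hI]

lemma starEdge_right_not {O I : Set V} {v : V} (hO : v ∉ O) (hI : v ∉ I) (u : V) :
    starEdge O I u v = 0 := by
  simp [starEdge, hO, hI]

lemma starEdge_neg (O I : Set V) (u v : V) : starEdge I O u v = - starEdge O I u v := by
  simp only [starEdge, and_comm]
  ring

lemma starEdge_OI {O I : Set V} (hd : Disjoint O I) {u v : V} (hu : u ∈ O) (hv : v ∈ I) :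
    starEdge O I u v = 1 := by
  have h1 : u ∉ I := fun h => (Set.disjoint_left.mp hd hu) h
  simp [starEdge, hu, hv, h1]

lemma starFun_neg (p : V) (O I : Set V) (a b c : V) :
    starFun p I O a b c = - starFun p O I a b c := by
  by_cases h1 : a = p <;> by_cases h2 : b = p <;> by_cases h3 : c = p <;>
    simp only [starFun, starEdge, h1, h2, h3, if_true, if_false, eq_self_iff_true] <;>
    try ring

/-- star functions vanish on triples avoiding the apex -/
lemma starFun_vanish {p : V} {O I : Set V} {a b c : V}
    (ha : a ≠ p) (hb : b ≠ p) (hc : c ≠ p) : starFun p O I a b c = 0 := by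
  simp only [starFun, if_neg ha, if_neg hb, if_neg hc]
  ring

lemma starFun_apex {p : V} (O I : Set V) {b c : V} (hb : b ≠ p) (hc : c ≠ p) :
    starFun p O I p b c = starEdge O I b c := by
  simp only [starFun, eq_self_iff_true, if_true, if_neg hb, if_neg hc]
  ring

lemma starFun_one {p : V} {O I : Set V} (hpO : p ∉ O) (hpI : p ∉ I)
    (hd : Disjoint O I) {o i : V} (ho : o ∈ O) (hi : i ∈ I) :
    starFun p O I p o i = 1 := by
  have hop : o ≠ p := fun h => hpO (h ▸ ho)
  have hip : i ≠ p := fun h => hpI (h ▸ hi)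
  rw [starFun_apex _ _ hop hip, starEdge_OI hd ho hi]

lemma starFun_empty (p : V) (O : Set V) (a b c : V) : starFun p O ∅ a b c = 0 := by
  simp [starFun, starEdge]

def delta (g : V → V → ℤ) (a b c : V) : ℤ := g b c - g a c + g a b

lemma delta_congr {g g' : V → V → ℤ} {h : V → ℤ}
    (hgg : ∀ u v, g u v = g' u v + h v - h u) (a b c : V) :
    delta g a b c = delta g' a b c := by
  simp only [delta, hgg]; ring

/-- for a full partition, the star function is the coboundary of the star edge fn -/
lemma starFun_eq_delta {p : V} {O I : Set V} (hpO : p ∉ O) (hpI : p ∉ I)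
    (hd : Disjoint O I) (hcov : insert p (O ∪ I) = (Set.univ : Set V)) (a b c : V) :
    starFun p O I a b c = delta (starEdge O I) a b c := by
  have hmem : ∀ v : V, v = p ∨ v ∈ O ∨ v ∈ I := by
    intro v
    have : v ∈ insert p (O ∪ I) := by rw [hcov]; trivial
    simpa [Set.mem_insert_iff, Set.mem_union] using this
  have hOI : ∀ v, v ∈ O → v ∉ I := fun v hv => Set.disjoint_left.mp hd hv
  have hIO : ∀ v, v ∈ I → v ∉ O := fun v hv => Set.disjoint_right.mp hd hv
  have key : ∀ u v : V, u ≠ p → v ≠ p →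
      starEdge O I u v = (if v ∈ I then (1:ℤ) else 0) - (if u ∈ I then (1:ℤ) else 0) := by
    intro u v hu hv
    rcases (hmem u).resolve_left hu with hu' | hu' <;>
      rcases (hmem v).resolve_left hv with hv' | hv'
    · simp [starEdge, hOI _ hu', hOI _ hv']
    · simp [starEdge, hu', hv', hOI _ hu']
    · simp [starEdge, hu', hv', hOI _ hv', hIO _ hu']
    · simp [starEdge, hu', hv', hIO _ hu', hIO _ hv']
  have hz : ∀ v, starEdge O I p v = 0 := fun v => starEdge_left_not hpO hpI v
  have hz' : ∀ v, starEdge O I v p = 0 := fun v => starEdge_right_not hpO hpI v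
  simp only [delta, starFun]
  by_cases h1 : a = p <;> by_cases h2 : b = p <;> by_cases h3 : c = p
  · subst h1; subst h2; subst h3; simp [hz]
  · subst h1; subst h2; simp [hz]
  · subst h1; subst h3; simp [hz, hz']
  · subst h1; simp only [eq_self_iff_true, if_true, if_neg h2, if_neg h3, hz, hz']
    try ring
  · subst h2; subst h3; simp [hz, hz']
  · subst h2; simp only [eq_self_iff_true, if_true, if_neg h1, if_neg h3, hz, hz']
    try ring
  · subst h3; simp only [eq_self_iff_true, if_true, if_neg h1, if_neg h2, hz, hz']
    try ring
  · simp only [if_neg h1, if_neg h2, if_neg h3]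
    rw [key b c h2 h3, key a c h1 h3, key a b h1 h2]; ring

end StarHelpers

section Swap

variable {V : Type*}

lemma cover_mem {p : V} {O I : Set V} (hcov : insert p (O ∪ I) = (Set.univ : Set V)) :
    ∀ v : V, v = p ∨ v ∈ O ∨ v ∈ I := by
  intro v
  have : v ∈ insert p (O ∪ I) := by rw [hcov]; trivial
  simpa [Set.mem_insert_iff, Set.mem_union] using this

lemma starFun_eq_of_edge {p p' : V} {O I O' I' : Set V} {h : V → ℤ}
    (h1 : p ∉ O) (h2 : p ∉ I) (h3 : Disjoint O I) (h4 : insert p (O ∪ I) = (Set.univ : Set V))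
    (h1' : p' ∉ O') (h2' : p' ∉ I') (h3' : Disjoint O' I')
    (h4' : insert p' (O' ∪ I') = (Set.univ : Set V))
    (hedge : ∀ u v, starEdge O I u v = starEdge O' I' u v + h v - h u) :
    ∀ a b c, starFun p O I a b c = starFun p' O' I' a b c := by
  intro a b c
  rw [starFun_eq_delta h1 h2 h3 h4, starFun_eq_delta h1' h2' h3' h4']
  exact delta_congr hedge a b c

/-- `star q {p} I = star p I {q}` -/
lemma star_swap {q p : V} {I : Set V} (hsp : IsStarPartition q {p} I) :
    IsStarPartition p I ({q} : Set V) ∧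
      ∀ a b c, starFun q {p} I a b c = starFun p I ({q} : Set V) a b c := by
  obtain ⟨-, hIne, hqp', hqI, hdisj, hcov⟩ := hsp
  have hqp : q ≠ p := by simpa using hqp'
  have hpI : p ∉ I := Set.disjoint_left.mp hdisj rfl
  have htri := cover_mem hcov
  have hInotp : ∀ x, x ∈ I → x ≠ p := fun x hx he => hpI (he ▸ hx)
  have hInotq : ∀ x, x ∈ I → x ≠ q := fun x hx he => hqI (he ▸ hx)
  have hd2 : Disjoint I ({q} : Set V) := by
    rw [Set.disjoint_right]; intro a ha
    rw [Set.mem_singleton_iff] at ha; subst ha; exact hqI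
  have hcov2 : insert p (I ∪ ({q} : Set V)) = (Set.univ : Set V) := by
    ext v
    simp only [Set.mem_insert_iff, Set.mem_union, Set.mem_singleton_iff, Set.mem_univ,
      iff_true]
    rcases htri v with h | h | h
    · tauto
    · rw [Set.mem_singleton_iff] at h; tauto
    · tauto
  have hsp2 : IsStarPartition p I ({q} : Set V) :=
    ⟨hIne, ⟨q, rfl⟩, hpI, by simpa using hqp.symm, hd2, hcov2⟩
  refine ⟨hsp2, starFun_eq_of_edge hqp' hqI hdisj hcov hpI (by simpa using hqp.symm)
    hd2 hcov2 (h := fun v => if v ∈ I then (1:ℤ) else 0) ?_⟩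
  intro u v
  rcases htri u with hu | hu | hu <;> rcases htri v with hv | hv | hv
  · subst hu; subst hv; simp [starEdge, hqp, hqI]
  · subst hu; subst hv; simp [starEdge, hqp, hqI, hpI]
  · subst hu; simp [starEdge, hqp, hqI, hpI, hv, hInotq _ hv]
  · subst hu; subst hv; simp [starEdge, hqp.symm, hqI, hpI]
  · subst hu; subst hv; simp [starEdge, hpI]
  · subst hu; simp [starEdge, hqp.symm, hpI, hv, hInotq _ hv, hInotp _ hv]
  · subst hv; simp [starEdge, hqp, hqI, hpI, hu, hInotp _ hu, hInotq _ hu]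
  · subst hv; simp [starEdge, hqp.symm, hpI, hu, hInotp _ hu, hInotq _ hu]
  · simp [starEdge, hu, hv, hInotp _ hu, hInotq _ hu, hInotp _ hv, hInotq _ hv]

end Swap

section Swap2

variable {V : Type*}

lemma partition_swap {p : V} {O I : Set V} (h : IsStarPartition p O I) :
    IsStarPartition p I O := by
  obtain ⟨h1, h2, h3, h4, h5, h6⟩ := h
  exact ⟨h2, h1, h4, h3, h5.symm, by rwa [Set.union_comm]⟩

/-- `star q O {p} = star p {q} O` -/
lemma star_swap' {q p : V} {O : Set V} (hsp : IsStarPartition q O {p}) :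
    IsStarPartition p ({q} : Set V) O ∧
      ∀ a b c, starFun q O {p} a b c = starFun p ({q} : Set V) O a b c := by
  obtain ⟨hsp2, heq⟩ := star_swap (partition_swap hsp)
  refine ⟨partition_swap hsp2, fun a b c => ?_⟩
  have h1 := starFun_neg q O ({p} : Set V) a b c
  have h2 := starFun_neg p O ({q} : Set V) a b c
  have h3 := heq a b c
  omega

lemma apex_align {q : V} {O I : Set V} (hsp : IsStarPartition q O I) (p : V)
    (hvan : ∀ a b c, a ≠ p → b ≠ p → c ≠ p → starFun q O I a b c = 0) :
    ∃ O' I', IsStarPartition p O' I' ∧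
      ∀ a b c, starFun q O I a b c = starFun p O' I' a b c := by
  by_cases hqp : q = p
  · subst hqp; exact ⟨O, I, hsp, fun _ _ _ => rfl⟩
  obtain ⟨hOne, hIne, hqO, hqI, hdisj, hcov⟩ := hsp
  have hmem := cover_mem hcov
  rcases (hmem p).resolve_left (fun h => hqp h.symm) with hpO | hpI
  · -- O = {p}
    have hO : O = ({p} : Set V) := by
      ext o; simp only [Set.mem_singleton_iff]
      constructor
      · intro ho
        by_contra hop
        obtain ⟨i, hi⟩ := hIne
        have hip : i ≠ p := fun h => (Set.disjoint_left.mp hdisj hpO) (h ▸ hi)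
        have := hvan q o i hqp hop hip
        rw [starFun_one hqO hqI hdisj ho hi] at this
        norm_num at this
      · intro h; exact h ▸ hpO
    subst hO
    obtain ⟨hsp2, heq⟩ := star_swap ⟨⟨p, rfl⟩, hIne, hqO, hqI, hdisj, hcov⟩
    exact ⟨I, {q}, hsp2, heq⟩
  · -- I = {p}
    have hI : I = ({p} : Set V) := by
      ext i; simp only [Set.mem_singleton_iff]
      constructor
      · intro hi
        by_contra hip
        obtain ⟨o, ho⟩ := hOne
        have hop : o ≠ p := fun h => (Set.disjoint_right.mp hdisj hpI) (h ▸ ho)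
        have := hvan q o i hqp hop hip
        rw [starFun_one hqO hqI hdisj ho hi] at this
        norm_num at this
      · intro h; exact h ▸ hpI
    subst hI
    obtain ⟨hsp2, heq⟩ := star_swap' ⟨hOne, ⟨p, rfl⟩, hqO, hqI, hdisj, hcov⟩
    exact ⟨{q}, O, hsp2, heq⟩

end Swap2

section Part1

variable {V : Type*}

lemma part1_pos {f : V → V → V → ℤ} (hlin : IsLinkingFun f) (hw : IsWeak f)
    {p q r : V} (hpq : p ≠ q) (hpr : p ≠ r) (hqr : q ≠ r) (h1 : f p q r = 1) :
    ∃ (p' : V) (O I : Set V), IsStarPartition p' O I ∧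
      ∀ a b c, f a b c = starFun p' O I a b c := by
  obtain ⟨halt, hco⟩ := hlin
  have G1 : ∀ a b c, f a b c = delta (fun u v => f p u v) a b c := by
    intro a b c
    have := hco p a b c
    simp only [delta]
    omega
  have gpzero : ∀ b, f p p b = 0 := fun b => alt_aab halt p b
  have gzero' : ∀ b, f p b p = 0 := fun b => alt_aba halt p b
  have gdiag : ∀ b, f p b b = 0 := fun b => alt_abb halt p b
  have gsymm : ∀ u v, f p v u = - f p u v := fun u v => halt.2 p u v
  have gbound : ∀ u v, -1 ≤ f p u v ∧ f p u v ≤ 1 := by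
    intro u v
    by_cases huv : u = v
    · subst huv; rw [gdiag]; omega
    by_cases hup : u = p
    · subst hup; rw [gpzero]; omega
    by_cases hvp : v = p
    · subst hvp; rw [gzero']; omega
    have := hw [p, u, v] (isCycle_tri (Ne.symm hup) (Ne.symm hvp) huv)
    rw [cycleVal_tri, abs_le] at this
    exact this
  have G4 : ∀ x y z, x ≠ z → f p x y = 1 → f p y z = 1 → False := by
    intro x y z hxz hxy hyz
    have hxp : x ≠ p := fun h => by rw [h, gpzero] at hxy; omega
    have hyp : y ≠ p := fun h => by rw [h, gpzero] at hyz; omega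
    have hzp : z ≠ p := fun h => by rw [h, gzero'] at hyz; omega
    have hxy' : x ≠ y := fun h => by rw [h, gdiag] at hxy; omega
    have hyz' : y ≠ z := fun h => by rw [h, gdiag] at hyz; omega
    have := hw [p, x, y, z]
      (isCycle_quad (Ne.symm hxp) (Ne.symm hyp) (Ne.symm hzp) hxy' hxz hyz')
    rw [cycleVal_quad, hxy, hyz] at this
    norm_num at this
  set O : Set V := {x | ∃ y, f p x y = 1} with hO
  set I : Set V := {x | ∃ y, f p y x = 1} with hI
  have hqO : q ∈ O := ⟨r, h1⟩
  have hrI : r ∈ I := ⟨q, h1⟩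
  have hpO : p ∉ O := by rintro ⟨y, hy⟩; rw [gpzero] at hy; omega
  have hpI : p ∉ I := by rintro ⟨y, hy⟩; rw [gzero'] at hy; omega
  have hdisj : ∀ x, x ∈ O → x ∈ I → False := by
    rintro x ⟨v, hv⟩ ⟨u, hu⟩
    by_cases huv : u = v
    · subst huv
      have := gsymm x u
      omega
    · exact G4 u x v huv hu hv
  have hdisjOI : Disjoint O I := Set.disjoint_left.mpr (fun x hx h => hdisj x hx h)
  have G5 : ∀ x y, x ∈ O → y ∈ I → f p x y = 1 := by
    rintro x y ⟨y', hy'⟩ ⟨x', hx'⟩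
    have hxOmem : x ∈ O := ⟨y', hy'⟩
    have hyImem : y ∈ I := ⟨x', hx'⟩
    have hxy : x ≠ y := fun h => hdisj x hxOmem (h ▸ hyImem)
    rcases eq_or_ne (f p x y) 1 with h | h
    · exact h
    exfalso
    rcases eq_or_ne (f p x y) (-1) with hm | hm
    · have hxx' : x' ≠ x := fun h => by rw [h] at hx'; omega
      have hyx : f p y x = 1 := by have := gsymm x y; omega
      exact G4 x' y x hxx' hx' hyx
    · have h0 : f p x y = 0 := by have := gbound x y; omega
      have hxx' : x' ≠ x := fun h => by rw [h, h0] at hx'; omega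
      have hyy' : y' ≠ y := fun h => by rw [h, h0] at hy'; omega
      have hx'O : x' ∈ O := ⟨y, hx'⟩
      have hy'I : y' ∈ I := ⟨x, hy'⟩
      have hx'p : x' ≠ p := fun h => by rw [h, gpzero] at hx'; omega
      have hyp : y ≠ p := fun h => by rw [h, gzero'] at hx'; omega
      have hxp : x ≠ p := fun h => by rw [h, gpzero] at hy'; omega
      have hy'p : y' ≠ p := fun h => by rw [h, gzero'] at hy'; omega
      have hx'y : x' ≠ y := fun h => hdisj x' hx'O (h ▸ hyImem)
      have hx'y' : x' ≠ y' := fun h => hdisj x' hx'O (h ▸ hy'I)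
      have hxy'2 : x ≠ y' := fun h => hdisj x hxOmem (h ▸ hy'I)
      have := hw [p, x', y, x, y']
        (isCycle_pent (Ne.symm hx'p) (Ne.symm hyp) (Ne.symm hxp) (Ne.symm hy'p)
          hx'y hxx' hx'y' hxy.symm hyy'.symm hxy'2)
      rw [cycleVal_pent, hx', hy'] at this
      have hyx0 : f p y x = 0 := by have := gsymm x y; omega
      rw [hyx0] at this
      norm_num at this
  have G7 : ∀ u v, f p u v = starEdge O I u v := by
    intro u v
    rcases eq_or_ne (f p u v) 1 with h | h
    · rw [h, (starEdge_OI hdisjOI ⟨v, h⟩ ⟨u, h⟩).symm]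
    rcases eq_or_ne (f p u v) (-1) with hm | hm
    · have hvu : f p v u = 1 := by have := gsymm u v; omega
      have hvO : v ∈ O := ⟨u, hvu⟩
      have huI : u ∈ I := ⟨v, hvu⟩
      have huO : u ∉ O := fun h => hdisj u h huI
      have hvI : v ∉ I := fun h => hdisj v hvO h
      rw [hm]
      simp [starEdge, huO, hvI, huI, hvO]
    · have h0 : f p u v = 0 := by have := gbound u v; omega
      have c1 : ¬(u ∈ O ∧ v ∈ I) := fun ⟨a, b⟩ => h (G5 u v a b)
      have c2 : ¬(u ∈ I ∧ v ∈ O) := by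
        rintro ⟨a, b⟩
        have := G5 v u b a
        have := gsymm u v
        omega
      rw [h0]
      simp only [starEdge, if_neg c1, if_neg c2]
      norm_num
  by_cases hS : ∀ v : V, v = p ∨ v ∈ O ∨ v ∈ I
  · have hcov : insert p (O ∪ I) = (Set.univ : Set V) := by
      ext v
      simp only [Set.mem_insert_iff, Set.mem_union, Set.mem_univ, iff_true]
      exact hS v
    refine ⟨p, O, I, ⟨⟨q, hqO⟩, ⟨r, hrI⟩, hpO, hpI, hdisjOI, hcov⟩, ?_⟩
    intro a b c
    rw [G1, starFun_eq_delta hpO hpI hdisjOI hcov]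
    simp only [delta, G7]
  · push_neg at hS
    obtain ⟨s, hsp, hsO, hsI⟩ := hS
    have gsl : ∀ v, f p s v = 0 := fun v => by
      rw [G7]; exact starEdge_left_not hsO hsI v
    have gsr : ∀ v, f p v s = 0 := fun v => by
      rw [G7]; exact starEdge_right_not hsO hsI v
    have gOO : ∀ a b, a ∈ O → b ∈ O → f p a b = 0 := by
      intro a b ha hb
      rw [G7]
      have hbI : b ∉ I := fun h => hdisj b hb h
      have haI : a ∉ I := fun h => hdisj a ha h
      simp [starEdge, hbI, haI]
    by_cases htwo : (∃ x ∈ O, x ≠ q) ∧ (∃ y ∈ I, y ≠ r)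
    · exfalso
      obtain ⟨⟨x₂, hx₂O, hx₂q⟩, ⟨y₂, hy₂I, hy₂r⟩⟩ := htwo
      have hqs : q ≠ s := fun h => hsO (h ▸ hqO)
      have hrs : r ≠ s := fun h => hsI (h ▸ hrI)
      have hx₂s : x₂ ≠ s := fun h => hsO (h ▸ hx₂O)
      have hy₂s : y₂ ≠ s := fun h => hsI (h ▸ hy₂I)
      have hqy₂ : q ≠ y₂ := fun h => hdisj q hqO (h ▸ hy₂I)
      have hrx₂ : r ≠ x₂ := fun h => hdisj x₂ hx₂O (by rwa [h] at hrI)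
      have hx₂y₂ : x₂ ≠ y₂ := fun h => hdisj x₂ hx₂O (h ▸ hy₂I)
      have hqp' : q ≠ p := Ne.symm hpq
      have hrp : r ≠ p := Ne.symm hpr
      have hx₂p : x₂ ≠ p := fun h => hpO (h ▸ hx₂O)
      have hy₂p : y₂ ≠ p := fun h => hpI (h ▸ hy₂I)
      have hcyc := hw [q, r, s, x₂, y₂, p]
        (isCycle_hex hqr hqs hx₂q.symm hqy₂ hqp' hrs hrx₂ hy₂r.symm hrp
          hx₂s.symm hy₂s.symm hsp hx₂y₂ hx₂p hy₂p)
      rw [cycleVal_hex] at hcyc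
      have e1 : f q r s = 1 := by
        rw [G1]; simp only [delta]
        rw [gsr, gsr, h1]; ring
      have e2 : f q s x₂ = 0 := by
        rw [G1]; simp only [delta]
        rw [gsl, gsr, gOO q x₂ hqO hx₂O]; ring
      have e3 : f q x₂ y₂ = 0 := by
        rw [G1]; simp only [delta]
        rw [G5 x₂ y₂ hx₂O hy₂I, G5 q y₂ hqO hy₂I, gOO q x₂ hqO hx₂O]; ring
      have e4 : f q y₂ p = 1 := by
        rw [G1]; simp only [delta]
        rw [gzero', gzero', G5 q y₂ hqO hy₂I]; ring
      rw [e1, e2, e3, e4] at hcyc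
      norm_num at hcyc
    · rw [not_and_or] at htwo
      push_neg at htwo
      rcases htwo with hOsing | hIsing
      · -- O = {q}
        have hOq : O = ({q} : Set V) := by
          ext x
          simp only [Set.mem_singleton_iff]
          exact ⟨fun hx => hOsing x hx, fun hx => hx ▸ hqO⟩
        set J : Set V := {v | v ∉ I ∧ v ≠ q} with hJ
        have hqI : q ∉ I := fun h => hdisj q hqO h
        have hqJ : q ∉ J := by simp [hJ]
        have hdIJ : Disjoint I J := by
          rw [Set.disjoint_left]
          intro x hx hx'
          exact hx'.1 hx
        have hcov2 : insert q (I ∪ J) = (Set.univ : Set V) := by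
          ext v
          simp only [Set.mem_insert_iff, Set.mem_union, Set.mem_univ, iff_true, hJ,
            Set.mem_setOf_eq]
          tauto
        have hpJ : p ∈ J := ⟨hpI, hpq⟩
        refine ⟨q, I, J, ⟨⟨r, hrI⟩, ⟨p, hpJ⟩, hqI, hqJ, hdIJ, hcov2⟩, ?_⟩
        intro a b c
        rw [G1, starFun_eq_delta hqI hqJ hdIJ hcov2]
        refine delta_congr (h := fun v => if v ∈ I then (1:ℤ) else 0) ?_ a b c
        intro u v
        rw [G7, hOq]
        have htriv : ∀ w : V, w = q ∨ w ∈ I ∨ w ∈ J := by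
          intro w
          by_cases h1' : w = q
          · tauto
          by_cases h2' : w ∈ I
          · tauto
          · exact Or.inr (Or.inr ⟨h2', h1'⟩)
        have hInq : ∀ x, x ∈ I → x ≠ q := fun x hx he => hqI (he ▸ hx)
        have hInJ : ∀ x, x ∈ I → x ∉ J := fun x hx hx' => hx'.1 hx
        have hJnI : ∀ x, x ∈ J → x ∉ I := fun x hx => hx.1
        have hJnq : ∀ x, x ∈ J → x ≠ q := fun x hx => hx.2
        rcases htriv u with hu | hu | hu <;> rcases htriv v with hv | hv | hv
        · subst hu; subst hv; simp [starEdge, hqI, hqJ]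
        · subst hu; simp [starEdge, hqI, hqJ, hv, hInq _ hv, hInJ _ hv]
        · subst hu; simp [starEdge, hqI, hqJ, hv, hJnI _ hv, hJnq _ hv]
        · subst hv; simp [starEdge, hqI, hqJ, hu, hInq _ hu, hInJ _ hu]
        · simp [starEdge, hu, hv, hInq _ hu, hInJ _ hu, hInq _ hv, hInJ _ hv]
        · simp [starEdge, hu, hv, hInq _ hu, hInJ _ hu, hJnI _ hv, hJnq _ hv]
        · subst hv; simp [starEdge, hqI, hqJ, hu, hJnI _ hu, hJnq _ hu]
        · simp [starEdge, hu, hv, hJnI _ hu, hJnq _ hu, hInq _ hv, hInJ _ hv]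
        · simp [starEdge, hu, hv, hJnI _ hu, hJnq _ hu, hJnI _ hv, hJnq _ hv]
      · -- I = {r}
        have hIr : I = ({r} : Set V) := by
          ext x
          simp only [Set.mem_singleton_iff]
          exact ⟨fun hx => hIsing x hx, fun hx => hx ▸ hrI⟩
        set J : Set V := {v | v ∉ O ∧ v ≠ r} with hJ
        have hrO : r ∉ O := fun h => hdisj r h hrI
        have hrJ : r ∉ J := by simp [hJ]
        have hdJO : Disjoint J O := by
          rw [Set.disjoint_left]
          intro x hx hx'
          exact hx.1 hx'
        have hcov2 : insert r (J ∪ O) = (Set.univ : Set V) := by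
          ext v
          simp only [Set.mem_insert_iff, Set.mem_union, Set.mem_univ, iff_true, hJ,
            Set.mem_setOf_eq]
          tauto
        have hpJ : p ∈ J := ⟨hpO, hpr⟩
        refine ⟨r, J, O, ⟨⟨p, hpJ⟩, ⟨q, hqO⟩, hrJ, hrO, hdJO, hcov2⟩, ?_⟩
        intro a b c
        rw [G1, starFun_eq_delta hrJ hrO hdJO hcov2]
        refine delta_congr (h := fun v => if v ∈ O then (-1:ℤ) else 0) ?_ a b c
        intro u v
        rw [G7, hIr]
        have htriv : ∀ w : V, w = r ∨ w ∈ O ∨ w ∈ J := by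
          intro w
          by_cases h1' : w = r
          · tauto
          by_cases h2' : w ∈ O
          · tauto
          · exact Or.inr (Or.inr ⟨h2', h1'⟩)
        have hOnr : ∀ x, x ∈ O → x ≠ r := fun x hx he => hrO (he ▸ hx)
        have hOnJ : ∀ x, x ∈ O → x ∉ J := fun x hx hx' => hx'.1 hx
        have hJnO : ∀ x, x ∈ J → x ∉ O := fun x hx => hx.1
        have hJnr : ∀ x, x ∈ J → x ≠ r := fun x hx => hx.2
        rcases htriv u with hu | hu | hu <;> rcases htriv v with hv | hv | hv
        · subst hu; subst hv; simp [starEdge, hrO, hrJ]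
        · subst hu; simp [starEdge, hrO, hrJ, hv, hOnr _ hv, hOnJ _ hv]
        · subst hu; simp [starEdge, hrO, hrJ, hv, hJnO _ hv, hJnr _ hv]
        · subst hv; simp [starEdge, hrO, hrJ, hu, hOnr _ hu, hOnJ _ hu]
        · simp [starEdge, hu, hv, hOnr _ hu, hOnJ _ hu, hOnr _ hv, hOnJ _ hv]
        · simp [starEdge, hu, hv, hOnr _ hu, hOnJ _ hu, hJnO _ hv, hJnr _ hv]
        · subst hv; simp [starEdge, hrO, hrJ, hu, hJnO _ hu, hJnr _ hu]
        · simp [starEdge, hu, hv, hJnO _ hu, hJnr _ hu, hOnr _ hv, hOnJ _ hv]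
        · simp [starEdge, hu, hv, hJnO _ hu, hJnr _ hu, hJnO _ hv, hJnr _ hv]

lemma part1 {f : V → V → V → ℤ} (hlin : IsLinkingFun f) (hw : IsWeak f)
    (hnt : IsNontrivial f) :
    ∃ (p : V) (O I : Set V), IsStarPartition p O I ∧
      ∀ a b c, f a b c = starFun p O I a b c := by
  obtain ⟨p, q, r, hpq, hpr, hqr, hval⟩ := exists_triangle hlin.1 hnt
  have hb := hw [p, q, r] (isCycle_tri hpq hpr hqr)
  rw [cycleVal_tri, abs_le] at hb
  rcases eq_or_ne (f p q r) 1 with h | h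
  · exact part1_pos ⟨hlin.1, hlin.2⟩ hw hpq hpr hqr h
  · have hm : f p q r = -1 := by omega
    have hneg : (fun a b c => - f a b c) p q r = 1 := by simp [hm]
    obtain ⟨p', O, I, hsp, heq⟩ := part1_pos (lk_neg hlin) (weak_neg hw) hpq hpr hqr hneg
    refine ⟨p', I, O, partition_swap hsp, fun a b c => ?_⟩
    have h2 := starFun_neg p' O I a b c
    have h3 := heq a b c
    omega

end Part1

section Part2Tools

variable {V : Type*}

lemma starEdge_chi {p : V} {O I : Set V} (hpO : p ∉ O) (hpI : p ∉ I)
    (hd : Disjoint O I) (hcov : insert p (O ∪ I) = (Set.univ : Set V))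
    {u v : V} (hu : u ≠ p) (hv : v ≠ p) :
    starEdge O I u v = (if v ∈ I then (1:ℤ) else 0) - (if u ∈ I then (1:ℤ) else 0) := by
  have hmem := cover_mem hcov
  have hOI : ∀ w, w ∈ O → w ∉ I := fun w hw => Set.disjoint_left.mp hd hw
  have hIO : ∀ w, w ∈ I → w ∉ O := fun w hw => Set.disjoint_right.mp hd hw
  rcases (hmem u).resolve_left hu with hu' | hu' <;>
    rcases (hmem v).resolve_left hv with hv' | hv'
  · simp [starEdge, hOI _ hu', hOI _ hv']
  · simp [starEdge, hu', hv', hOI _ hu']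
  · simp [starEdge, hu', hv', hOI _ hv', hIO _ hu']
  · simp [starEdge, hu', hv', hIO _ hu', hIO _ hv']

/-- clash between an A1-type representation and an A2-type representation -/
lemma eval_clash {p pi o y : V} {OO II PP CC : Set V} {ε : ℤ} {fi : V → V → V → ℤ}
    (h1 : (fun a b c => ε * fi a b c) = starFun p OO II)
    (h2 : (fun a b c => ε * fi a b c) = starFun pi PP CC)
    (hpi : pi ≠ p) (ho : o ≠ p) (hy : y ≠ p)
    (hPP : pi ∉ PP) (hCC : pi ∉ CC) (hd : Disjoint PP CC)
    (hoP : o ∈ PP) (hyC : y ∈ CC) : False := by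
  have e1 : ε * fi pi o y = 0 := by
    rw [show ε * fi pi o y = starFun p OO II pi o y from congrFun (congrFun (congrFun h1 pi) o) y]
    exact starFun_vanish hpi ho hy
  have e2 : ε * fi pi o y = 1 := by
    rw [show ε * fi pi o y = starFun pi PP CC pi o y from congrFun (congrFun (congrFun h2 pi) o) y]
    exact starFun_one hPP hCC hd hoP hyC
  omega

lemma mixed_contra {f g h : V → V → V → ℤ} {qf qg qh y : V} {Of If Og Ig : Set V}
    (hsum : ∀ a b c, f a b c + g a b c + h a b c = 0)
    (heqf : ∀ a b c, f a b c = starFun qf Of If a b c)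
    (heqg : ∀ a b c, g a b c = starFun qg Og Ig a b c)
    (hfO : qf ∉ Of) (hfI : qf ∉ If) (hgO : qg ∉ Og) (hgI : qg ∉ Ig)
    (hdf : Disjoint Of If) (hdg : Disjoint Og Ig)
    (hQf : qg ∈ Of) (hyf : y ∈ If) (hQg : qf ∈ Ig) (hyg : y ∈ Og)
    (hfg : qf ≠ qg) (hyqf : y ≠ qf) (hyqg : y ≠ qg)
    (hh : ∀ a b c, a ≠ qh → b ≠ qh → c ≠ qh → h a b c = 0)
    (hqhf : qf ≠ qh) (hqhg : qg ≠ qh) (hqhy : y ≠ qh) : False := by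
  have e1 : f qf qg y = 1 := by
    rw [heqf]
    exact starFun_one hfO hfI hdf hQf hyf
  have e2 : g qf qg y = 1 := by
    rw [heqg]
    have hfOg : qf ∉ Og := fun hc => (Set.disjoint_left.mp hdg hc) hQg
    simp only [starFun, starEdge, if_neg hfg, if_neg hyqg, eq_self_iff_true, if_true]
    simp [hQg, hyg, hfOg]
  have e3 : h qf qg y = 0 := hh _ _ _ hqhf hqhg hqhy
  have := hsum qf qg y
  omega

lemma side_analysis {f g h : V → V → V → ℤ} {qf qg qh : V} {O I : Set V}
    (hsum : ∀ a b c, f a b c + g a b c + h a b c = 0)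
    (hrep : IsStarPartition qf O I)
    (heq : ∀ a b c, f a b c = starFun qf O I a b c)
    (hg : ∀ a b c, a ≠ qg → b ≠ qg → c ≠ qg → g a b c = 0)
    (hh : ∀ a b c, a ≠ qh → b ≠ qh → c ≠ qh → h a b c = 0)
    (hfg : qf ≠ qg) (hfh : qf ≠ qh)
    (hno : ∀ v, (∀ a b c, a ≠ v → b ≠ v → c ≠ v → f a b c = 0) →
           (∀ a b c, a ≠ v → b ≠ v → c ≠ v → g a b c = 0) →
           (∀ a b c, a ≠ v → b ≠ v → c ≠ v → h a b c = 0) → False) :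
    (O = ({qg, qh} : Set V) ∧ I = ({qf, qg, qh} : Set V)ᶜ) ∨
      (I = ({qg, qh} : Set V) ∧ O = ({qf, qg, qh} : Set V)ᶜ) := by
  obtain ⟨hOne, hIne, hfOm, hfIm, hdisj, hcov⟩ := hrep
  have hthird : ∀ v, (∀ a b c, a ≠ v → b ≠ v → c ≠ v → f a b c = 0) →
      (∀ a b c, a ≠ v → b ≠ v → c ≠ v → g a b c = 0) →
      (∀ a b c, a ≠ v → b ≠ v → c ≠ v → h a b c = 0) := by
    intro v hf' hg' a b c ha hb hc
    have := hsum a b c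
    rw [hf' a b c ha hb hc, hg' a b c ha hb hc] at this
    omega
  have hsecond : ∀ v, (∀ a b c, a ≠ v → b ≠ v → c ≠ v → f a b c = 0) →
      (∀ a b c, a ≠ v → b ≠ v → c ≠ v → h a b c = 0) →
      (∀ a b c, a ≠ v → b ≠ v → c ≠ v → g a b c = 0) := by
    intro v hf' hh' a b c ha hb hc
    have := hsum a b c
    rw [hf' a b c ha hb hc, hh' a b c ha hb hc] at this
    omega
  have hfvan : ∀ a b c, a ≠ qg → b ≠ qg → c ≠ qg → a ≠ qh → b ≠ qh → c ≠ qh →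
      f a b c = 0 := by
    intro a b c h1 h2 h3 h4 h5 h6
    have := hsum a b c
    rw [hg a b c h1 h2 h3, hh a b c h4 h5 h6] at this
    omega
  have hfsingO : ∀ x, O = ({x} : Set V) →
      ∀ a b c, a ≠ x → b ≠ x → c ≠ x → f a b c = 0 := by
    intro x hOx a b c ha hb hc
    subst hOx
    obtain ⟨hsp2, heq2⟩ := star_swap ⟨hOne, hIne, hfOm, hfIm, hdisj, hcov⟩
    rw [heq a b c, heq2 a b c]
    exact starFun_vanish ha hb hc
  have hfsingI : ∀ x, I = ({x} : Set V) →
      ∀ a b c, a ≠ x → b ≠ x → c ≠ x → f a b c = 0 := by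
    intro x hIx a b c ha hb hc
    subst hIx
    obtain ⟨hsp2, heq2⟩ := star_swap' ⟨hOne, hIne, hfOm, hfIm, hdisj, hcov⟩
    rw [heq a b c, heq2 a b c]
    exact starFun_vanish ha hb hc
  have hstep : (∀ o ∈ O, o = qg ∨ o = qh) ∨ (∀ i ∈ I, i = qg ∨ i = qh) := by
    by_contra hcon
    push_neg at hcon
    obtain ⟨⟨o, hoO, hog, hoh⟩, ⟨i, hiI, hig, hih⟩⟩ := hcon
    have h1 : f qf o i = 1 := by rw [heq]; exact starFun_one hfOm hfIm hdisj hoO hiI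
    have h0 : f qf o i = 0 := hfvan qf o i hfg hog hig hfh hoh hih
    omega
  have hcompl : ∀ (S T : Set V), S = ({qg, qh} : Set V) → T = I ∨ T = O →
      (∀ v, v = qf ∨ v ∈ O ∨ v ∈ I) → True := fun _ _ _ _ _ => trivial
  rcases hstep with hOsub | hIsub
  · left
    have hgO : qg ∈ O := by
      by_contra hgO
      have hOx : O = ({qh} : Set V) := by
        ext x
        simp only [Set.mem_singleton_iff]
        constructor
        · intro hx
          rcases hOsub x hx with h' | h'
          · exact absurd (h' ▸ hx) hgO
          · exact h'
        · intro hx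
          obtain ⟨o, ho⟩ := hOne
          rcases hOsub o ho with h' | h'
          · exact absurd (h' ▸ ho) hgO
          · exact hx ▸ (h' ▸ ho)
      exact hno qh (hfsingO qh hOx) (hsecond qh (hfsingO qh hOx) hh) hh
    have hhO : qh ∈ O := by
      by_contra hhO
      have hOx : O = ({qg} : Set V) := by
        ext x
        simp only [Set.mem_singleton_iff]
        constructor
        · intro hx
          rcases hOsub x hx with h' | h'
          · exact h'
          · exact absurd (h' ▸ hx) hhO
        · intro hx
          obtain ⟨o, ho⟩ := hOne
          rcases hOsub o ho with h' | h'
          · exact hx ▸ (h' ▸ ho)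
          · exact absurd (h' ▸ ho) hhO
      exact hno qg (hfsingO qg hOx) hg (hthird qg (hfsingO qg hOx) hg)
    have hOeq : O = ({qg, qh} : Set V) := by
      ext x
      simp only [Set.mem_insert_iff, Set.mem_singleton_iff]
      constructor
      · exact hOsub x
      · rintro (h' | h')
        · exact h' ▸ hgO
        · exact h' ▸ hhO
    refine ⟨hOeq, ?_⟩
    ext v
    simp only [Set.mem_compl_iff, Set.mem_insert_iff, Set.mem_singleton_iff]
    constructor
    · intro hv
      push_neg
      refine ⟨fun h' => hfIm (h' ▸ hv), fun h' => ?_, fun h' => ?_⟩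
      · exact Set.disjoint_right.mp hdisj hv (h' ▸ hgO)
      · exact Set.disjoint_right.mp hdisj hv (h' ▸ hhO)
    · intro hv
      push_neg at hv
      rcases cover_mem hcov v with h' | h' | h'
      · exact absurd h' hv.1
      · rcases hOsub v h' with h'' | h''
        · exact absurd h'' hv.2.1
        · exact absurd h'' hv.2.2
      · exact h'
  · right
    have hgI : qg ∈ I := by
      by_contra hgI
      have hIx : I = ({qh} : Set V) := by
        ext x
        simp only [Set.mem_singleton_iff]
        constructor
        · intro hx
          rcases hIsub x hx with h' | h'
          · exact absurd (h' ▸ hx) hgI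
          · exact h'
        · intro hx
          obtain ⟨i, hi⟩ := hIne
          rcases hIsub i hi with h' | h'
          · exact absurd (h' ▸ hi) hgI
          · exact hx ▸ (h' ▸ hi)
      exact hno qh (hfsingI qh hIx) (hsecond qh (hfsingI qh hIx) hh) hh
    have hhI : qh ∈ I := by
      by_contra hhI
      have hIx : I = ({qg} : Set V) := by
        ext x
        simp only [Set.mem_singleton_iff]
        constructor
        · intro hx
          rcases hIsub x hx with h' | h'
          · exact h'
          · exact absurd (h' ▸ hx) hhI
        · intro hx
          obtain ⟨i, hi⟩ := hIne
          rcases hIsub i hi with h' | h'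
          · exact hx ▸ (h' ▸ hi)
          · exact absurd (h' ▸ hi) hhI
      exact hno qg (hfsingI qg hIx) hg (hthird qg (hfsingI qg hIx) hg)
    have hIeq : I = ({qg, qh} : Set V) := by
      ext x
      simp only [Set.mem_insert_iff, Set.mem_singleton_iff]
      constructor
      · exact hIsub x
      · rintro (h' | h')
        · exact h' ▸ hgI
        · exact h' ▸ hhI
    refine ⟨hIeq, ?_⟩
    ext v
    simp only [Set.mem_compl_iff, Set.mem_insert_iff, Set.mem_singleton_iff]
    constructor
    · intro hv
      push_neg
      refine ⟨fun h' => hfOm (h' ▸ hv), fun h' => ?_, fun h' => ?_⟩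
      · exact Set.disjoint_left.mp hdisj hv (h' ▸ hgI)
      · exact Set.disjoint_left.mp hdisj hv (h' ▸ hhI)
    · intro hv
      push_neg at hv
      rcases cover_mem hcov v with h' | h' | h'
      · exact absurd h' hv.1
      · exact h'
      · rcases hIsub v h' with h'' | h''
        · exact absurd h'' hv.2.1
        · exact absurd h'' hv.2.2

end Part2Tools

section CommonApex

variable {V : Type*}

lemma common_apex_case {f₁ f₂ f₃ : V → V → V → ℤ} {p : V} {O₁ I₁ O₂ I₂ O₃ I₃ : Set V}
    (hsum : ∀ a b c, f₁ a b c + f₂ a b c + f₃ a b c = 0)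
    (hr₁ : IsStarPartition p O₁ I₁) (he₁ : ∀ a b c, f₁ a b c = starFun p O₁ I₁ a b c)
    (hr₂ : IsStarPartition p O₂ I₂) (he₂ : ∀ a b c, f₂ a b c = starFun p O₂ I₂ a b c)
    (hr₃ : IsStarPartition p O₃ I₃) (he₃ : ∀ a b c, f₃ a b c = starFun p O₃ I₃ a b c) :
    ∃ ε : ℤ, (ε = 1 ∨ ε = -1) ∧
      (∃ (p' : V) (J₁ J₂ J₃ : Set V),
        Disjoint J₁ J₂ ∧ Disjoint J₁ J₃ ∧ Disjoint J₂ J₃ ∧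
        J₁ ∪ J₂ ∪ J₃ = ({p'} : Set V)ᶜ ∧
        ¬(J₁ = ∅ ∧ J₂ = ∅) ∧ ¬(J₁ = ∅ ∧ J₃ = ∅) ∧ ¬(J₂ = ∅ ∧ J₃ = ∅) ∧
        (fun a b c => ε * f₁ a b c) = starFun p' (J₂ ∪ J₃) J₁ ∧
        (fun a b c => ε * f₂ a b c) = starFun p' (J₁ ∪ J₃) J₂ ∧
        (fun a b c => ε * f₃ a b c) = starFun p' (J₁ ∪ J₂) J₃) := by
  obtain ⟨hO₁ne, hI₁ne, hpO₁, hpI₁, hd₁, hcov₁⟩ := hr₁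
  obtain ⟨hO₂ne, hI₂ne, hpO₂, hpI₂, hd₂, hcov₂⟩ := hr₂
  obtain ⟨hO₃ne, hI₃ne, hpO₃, hpI₃, hd₃, hcov₃⟩ := hr₃
  have hm : ∀ b c : V, b ≠ p → c ≠ p →
      ((if c ∈ I₁ then (1:ℤ) else 0) + (if c ∈ I₂ then (1:ℤ) else 0)
        + (if c ∈ I₃ then (1:ℤ) else 0))
      = (if b ∈ I₁ then (1:ℤ) else 0) + (if b ∈ I₂ then (1:ℤ) else 0)
        + (if b ∈ I₃ then (1:ℤ) else 0) := by
    intro b c hb hc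
    have hs := hsum p b c
    rw [he₁ p b c, he₂ p b c, he₃ p b c, starFun_apex _ _ hb hc, starFun_apex _ _ hb hc,
      starFun_apex _ _ hb hc, starEdge_chi hpO₁ hpI₁ hd₁ hcov₁ hb hc,
      starEdge_chi hpO₂ hpI₂ hd₂ hcov₂ hb hc,
      starEdge_chi hpO₃ hpI₃ hd₃ hcov₃ hb hc] at hs
    omega
  obtain ⟨q₁, hq₁O⟩ := hO₁ne
  obtain ⟨r₁, hr₁I⟩ := hI₁ne
  have hq₁p : q₁ ≠ p := fun h => hpO₁ (h ▸ hq₁O)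
  have hr₁p : r₁ ≠ p := fun h => hpI₁ (h ▸ hr₁I)
  have hq₁I₁ : q₁ ∉ I₁ := fun h => Set.disjoint_left.mp hd₁ hq₁O h
  -- the constant value of m on the complement of p is 1 or 2
  have hbd : ∀ (S : Set V) (v : V), (if v ∈ S then (1:ℤ) else 0) = 0 ∨
      (if v ∈ S then (1:ℤ) else 0) = 1 := by
    intro S v; by_cases h : v ∈ S <;> simp [h]
  have hk : ((if q₁ ∈ I₁ then (1:ℤ) else 0) + (if q₁ ∈ I₂ then (1:ℤ) else 0)
      + (if q₁ ∈ I₃ then (1:ℤ) else 0)) = 1 ∨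
      ((if q₁ ∈ I₁ then (1:ℤ) else 0) + (if q₁ ∈ I₂ then (1:ℤ) else 0)
      + (if q₁ ∈ I₃ then (1:ℤ) else 0)) = 2 := by
    have h1 := hm q₁ r₁ hq₁p hr₁p
    have e1 : (if r₁ ∈ I₁ then (1:ℤ) else 0) = 1 := if_pos hr₁I
    have e2 : (if q₁ ∈ I₁ then (1:ℤ) else 0) = 0 := if_neg hq₁I₁
    rcases hbd I₂ q₁ with h|h <;> rcases hbd I₃ q₁ with h'|h' <;>
      rcases hbd I₂ r₁ with h''|h'' <;> rcases hbd I₃ r₁ with h'''|h''' <;> omega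
  have hmv : ∀ v : V, v ≠ p →
      ((if v ∈ I₁ then (1:ℤ) else 0) + (if v ∈ I₂ then (1:ℤ) else 0)
        + (if v ∈ I₃ then (1:ℤ) else 0))
      = (if q₁ ∈ I₁ then (1:ℤ) else 0) + (if q₁ ∈ I₂ then (1:ℤ) else 0)
        + (if q₁ ∈ I₃ then (1:ℤ) else 0) := fun v hv => hm q₁ v hq₁p hv
  have hmemO₁ : ∀ v, v ≠ p → v ∉ I₁ → v ∈ O₁ := by
    intro v hv hvI
    rcases cover_mem hcov₁ v with h | h | h
    · exact absurd h hv
    · exact h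
    · exact absurd h hvI
  have hmemO₂ : ∀ v, v ≠ p → v ∉ I₂ → v ∈ O₂ := by
    intro v hv hvI
    rcases cover_mem hcov₂ v with h | h | h
    · exact absurd h hv
    · exact h
    · exact absurd h hvI
  have hmemO₃ : ∀ v, v ≠ p → v ∉ I₃ → v ∈ O₃ := by
    intro v hv hvI
    rcases cover_mem hcov₃ v with h | h | h
    · exact absurd h hv
    · exact h
    · exact absurd h hvI
  have hnpI₁ : ∀ v, v ∈ I₁ → v ≠ p := fun v hv h => hpI₁ (h ▸ hv)
  have hnpI₂ : ∀ v, v ∈ I₂ → v ≠ p := fun v hv h => hpI₂ (h ▸ hv)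
  have hnpI₃ : ∀ v, v ∈ I₃ → v ≠ p := fun v hv h => hpI₃ (h ▸ hv)
  have hnpO₁ : ∀ v, v ∈ O₁ → v ≠ p := fun v hv h => hpO₁ (h ▸ hv)
  have hnpO₂ : ∀ v, v ∈ O₂ → v ≠ p := fun v hv h => hpO₂ (h ▸ hv)
  have hnpO₃ : ∀ v, v ∈ O₃ → v ≠ p := fun v hv h => hpO₃ (h ▸ hv)
  rcases hk with hk1 | hk2
  · -- ε = 1, the inner sets partition
    have hmv1 : ∀ v : V, v ≠ p →
        ((if v ∈ I₁ then (1:ℤ) else 0) + (if v ∈ I₂ then (1:ℤ) else 0)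
          + (if v ∈ I₃ then (1:ℤ) else 0)) = 1 := fun v hv => (hmv v hv).trans hk1
    have hO₁eq : O₁ = I₂ ∪ I₃ := by
      ext v
      simp only [Set.mem_union]
      constructor
      · intro hvO
        have hvp := hnpO₁ v hvO
        have hvI₁ : v ∉ I₁ := fun h => Set.disjoint_left.mp hd₁ hvO h
        have h := hmv1 v hvp
        rw [if_neg hvI₁] at h
        by_cases h2 : v ∈ I₂
        · exact Or.inl h2
        by_cases h3 : v ∈ I₃
        · exact Or.inr h3
        · rw [if_neg h2, if_neg h3] at h; omega
      · intro hv
        have hvp : v ≠ p := by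
          rcases hv with h | h
          · exact hnpI₂ v h
          · exact hnpI₃ v h
        have h := hmv1 v hvp
        have hvI₁ : v ∉ I₁ := by
          intro hmem
          rw [if_pos hmem] at h
          rcases hbd I₂ v with h2 | h2 <;> rcases hbd I₃ v with h3 | h3 <;>
            rcases hv with hh | hh <;>
              first
                | (rw [if_pos hh] at *; omega)
                | omega
        exact hmemO₁ v hvp hvI₁
    have hO₂eq : O₂ = I₁ ∪ I₃ := by
      ext v
      simp only [Set.mem_union]
      constructor
      · intro hvO
        have hvp := hnpO₂ v hvO
        have hvI₂ : v ∉ I₂ := fun h => Set.disjoint_left.mp hd₂ hvO h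
        have h := hmv1 v hvp
        rw [if_neg hvI₂] at h
        by_cases h2 : v ∈ I₁
        · exact Or.inl h2
        by_cases h3 : v ∈ I₃
        · exact Or.inr h3
        · rw [if_neg h2, if_neg h3] at h; omega
      · intro hv
        have hvp : v ≠ p := by
          rcases hv with h | h
          · exact hnpI₁ v h
          · exact hnpI₃ v h
        have h := hmv1 v hvp
        have hvI₂ : v ∉ I₂ := by
          intro hmem
          rw [if_pos hmem] at h
          rcases hbd I₁ v with h2 | h2 <;> rcases hbd I₃ v with h3 | h3 <;>
            rcases hv with hh | hh <;>
              first
                | (rw [if_pos hh] at *; omega)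
                | omega
        exact hmemO₂ v hvp hvI₂
    have hO₃eq : O₃ = I₁ ∪ I₂ := by
      ext v
      simp only [Set.mem_union]
      constructor
      · intro hvO
        have hvp := hnpO₃ v hvO
        have hvI₃ : v ∉ I₃ := fun h => Set.disjoint_left.mp hd₃ hvO h
        have h := hmv1 v hvp
        rw [if_neg hvI₃] at h
        by_cases h2 : v ∈ I₁
        · exact Or.inl h2
        by_cases h3 : v ∈ I₂
        · exact Or.inr h3
        · rw [if_neg h2, if_neg h3] at h; omega
      · intro hv
        have hvp : v ≠ p := by
          rcases hv with h | h
          · exact hnpI₁ v h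
          · exact hnpI₂ v h
        have h := hmv1 v hvp
        have hvI₃ : v ∉ I₃ := by
          intro hmem
          rw [if_pos hmem] at h
          rcases hbd I₁ v with h2 | h2 <;> rcases hbd I₂ v with h3 | h3 <;>
            rcases hv with hh | hh <;>
              first
                | (rw [if_pos hh] at *; omega)
                | omega
        exact hmemO₃ v hvp hvI₃
    refine ⟨1, Or.inl rfl, p, I₁, I₂, I₃, ?_, ?_, ?_, ?_, ?_, ?_, ?_, ?_, ?_, ?_⟩
    · rw [Set.disjoint_left]
      intro v h1 h2
      have h := hmv1 v (hnpI₁ v h1)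
      rw [if_pos h1, if_pos h2] at h
      rcases hbd I₃ v with h3 | h3 <;> omega
    · rw [Set.disjoint_left]
      intro v h1 h2
      have h := hmv1 v (hnpI₁ v h1)
      rw [if_pos h1, if_pos h2] at h
      rcases hbd I₂ v with h3 | h3 <;> omega
    · rw [Set.disjoint_left]
      intro v h1 h2
      have h := hmv1 v (hnpI₂ v h1)
      rw [if_pos h1, if_pos h2] at h
      rcases hbd I₁ v with h3 | h3 <;> omega
    · ext v
      simp only [Set.mem_union, Set.mem_compl_iff, Set.mem_singleton_iff]
      constructor
      · rintro ((h | h) | h)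
        · exact hnpI₁ v h
        · exact hnpI₂ v h
        · exact hnpI₃ v h
      · intro hv
        have h := hmv1 v hv
        by_cases h1 : v ∈ I₁
        · exact Or.inl (Or.inl h1)
        by_cases h2 : v ∈ I₂
        · exact Or.inl (Or.inr h2)
        by_cases h3 : v ∈ I₃
        · exact Or.inr h3
        · rw [if_neg h1, if_neg h2, if_neg h3] at h; omega
    · exact fun h => (Set.nonempty_iff_ne_empty.mp ⟨r₁, hr₁I⟩) h.1
    · exact fun h => (Set.nonempty_iff_ne_empty.mp ⟨r₁, hr₁I⟩) h.1
    · exact fun h => (Set.nonempty_iff_ne_empty.mp hI₂ne) h.1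
    · funext a b c
      rw [one_mul, he₁ a b c, ← hO₁eq]
    · funext a b c
      rw [one_mul, he₂ a b c, ← hO₂eq]
    · funext a b c
      rw [one_mul, he₃ a b c, ← hO₃eq]
  · -- ε = -1, the outer sets partition
    have hmv2 : ∀ v : V, v ≠ p →
        ((if v ∈ I₁ then (1:ℤ) else 0) + (if v ∈ I₂ then (1:ℤ) else 0)
          + (if v ∈ I₃ then (1:ℤ) else 0)) = 2 := fun v hv => (hmv v hv).trans hk2
    have hOI₁ : ∀ v, v ∈ O₁ → v ∉ I₁ := fun v hv h => Set.disjoint_left.mp hd₁ hv h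
    have hOI₂ : ∀ v, v ∈ O₂ → v ∉ I₂ := fun v hv h => Set.disjoint_left.mp hd₂ hv h
    have hOI₃ : ∀ v, v ∈ O₃ → v ∉ I₃ := fun v hv h => Set.disjoint_left.mp hd₃ hv h
    have hI₁eq : I₁ = O₂ ∪ O₃ := by
      ext v
      simp only [Set.mem_union]
      constructor
      · intro hvI
        have hvp := hnpI₁ v hvI
        have h := hmv2 v hvp
        rw [if_pos hvI] at h
        by_cases h2 : v ∈ I₂
        · right
          apply hmemO₃ v hvp
          intro h3
          rw [if_pos h2, if_pos h3] at h; omega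
        · exact Or.inl (hmemO₂ v hvp h2)
      · intro hv
        have hvp : v ≠ p := by
          rcases hv with h | h
          · exact hnpO₂ v h
          · exact hnpO₃ v h
        have h := hmv2 v hvp
        by_cases h1 : v ∈ I₁
        · exact h1
        exfalso
        rw [if_neg h1] at h
        rcases hv with hh | hh
        · rw [if_neg (hOI₂ v hh)] at h
          rcases hbd I₃ v with h3 | h3 <;> omega
        · rw [if_neg (hOI₃ v hh)] at h
          rcases hbd I₂ v with h3 | h3 <;> omega
    have hI₂eq : I₂ = O₁ ∪ O₃ := by
      ext v
      simp only [Set.mem_union]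
      constructor
      · intro hvI
        have hvp := hnpI₂ v hvI
        have h := hmv2 v hvp
        rw [if_pos hvI] at h
        by_cases h2 : v ∈ I₁
        · right
          apply hmemO₃ v hvp
          intro h3
          rw [if_pos h2, if_pos h3] at h; omega
        · exact Or.inl (hmemO₁ v hvp h2)
      · intro hv
        have hvp : v ≠ p := by
          rcases hv with h | h
          · exact hnpO₁ v h
          · exact hnpO₃ v h
        have h := hmv2 v hvp
        by_cases h1 : v ∈ I₂
        · exact h1
        exfalso
        rw [if_neg h1] at h
        rcases hv with hh | hh
        · rw [if_neg (hOI₁ v hh)] at h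
          rcases hbd I₃ v with h3 | h3 <;> omega
        · rw [if_neg (hOI₃ v hh)] at h
          rcases hbd I₁ v with h3 | h3 <;> omega
    have hI₃eq : I₃ = O₁ ∪ O₂ := by
      ext v
      simp only [Set.mem_union]
      constructor
      · intro hvI
        have hvp := hnpI₃ v hvI
        have h := hmv2 v hvp
        rw [if_pos hvI] at h
        by_cases h2 : v ∈ I₁
        · right
          apply hmemO₂ v hvp
          intro h3
          rw [if_pos h2, if_pos h3] at h; omega
        · exact Or.inl (hmemO₁ v hvp h2)
      · intro hv
        have hvp : v ≠ p := by
          rcases hv with h | h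
          · exact hnpO₁ v h
          · exact hnpO₂ v h
        have h := hmv2 v hvp
        by_cases h1 : v ∈ I₃
        · exact h1
        exfalso
        rw [if_neg h1] at h
        rcases hv with hh | hh
        · rw [if_neg (hOI₁ v hh)] at h
          rcases hbd I₂ v with h3 | h3 <;> omega
        · rw [if_neg (hOI₂ v hh)] at h
          rcases hbd I₁ v with h3 | h3 <;> omega
    refine ⟨-1, Or.inr rfl, p, O₁, O₂, O₃, ?_, ?_, ?_, ?_, ?_, ?_, ?_, ?_, ?_, ?_⟩
    · rw [Set.disjoint_left]
      intro v h1 h2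
      have h := hmv2 v (hnpO₁ v h1)
      rw [if_neg (hOI₁ v h1), if_neg (hOI₂ v h2)] at h
      rcases hbd I₃ v with h3 | h3 <;> omega
    · rw [Set.disjoint_left]
      intro v h1 h2
      have h := hmv2 v (hnpO₁ v h1)
      rw [if_neg (hOI₁ v h1), if_neg (hOI₃ v h2)] at h
      rcases hbd I₂ v with h3 | h3 <;> omega
    · rw [Set.disjoint_left]
      intro v h1 h2
      have h := hmv2 v (hnpO₂ v h1)
      rw [if_neg (hOI₂ v h1), if_neg (hOI₃ v h2)] at h
      rcases hbd I₁ v with h3 | h3 <;> omega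
    · ext v
      simp only [Set.mem_union, Set.mem_compl_iff, Set.mem_singleton_iff]
      constructor
      · rintro ((h | h) | h)
        · exact hnpO₁ v h
        · exact hnpO₂ v h
        · exact hnpO₃ v h
      · intro hv
        have h := hmv2 v hv
        by_cases h1 : v ∈ O₁
        · exact Or.inl (Or.inl h1)
        by_cases h2 : v ∈ O₂
        · exact Or.inl (Or.inr h2)
        by_cases h3 : v ∈ O₃
        · exact Or.inr h3
        exfalso
        have m1 : v ∈ I₁ := by
          rcases cover_mem hcov₁ v with hh | hh | hh
          · exact absurd hh hv
          · exact absurd hh h1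
          · exact hh
        have m2 : v ∈ I₂ := by
          rcases cover_mem hcov₂ v with hh | hh | hh
          · exact absurd hh hv
          · exact absurd hh h2
          · exact hh
        have m3 : v ∈ I₃ := by
          rcases cover_mem hcov₃ v with hh | hh | hh
          · exact absurd hh hv
          · exact absurd hh h3
          · exact hh
        rw [if_pos m1, if_pos m2, if_pos m3] at h; omega
    · exact fun h => (Set.nonempty_iff_ne_empty.mp ⟨q₁, hq₁O⟩) h.1
    · exact fun h => (Set.nonempty_iff_ne_empty.mp ⟨q₁, hq₁O⟩) h.1
    · exact fun h => (Set.nonempty_iff_ne_empty.mp hO₂ne) h.1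
    · funext a b c
      have key : starFun p (O₂ ∪ O₃) O₁ a b c = - starFun p O₁ I₁ a b c := by
        rw [← hI₁eq]; exact starFun_neg p O₁ I₁ a b c
      rw [he₁ a b c, key]; ring
    · funext a b c
      have key : starFun p (O₁ ∪ O₃) O₂ a b c = - starFun p O₂ I₂ a b c := by
        rw [← hI₂eq]; exact starFun_neg p O₂ I₂ a b c
      rw [he₂ a b c, key]; ring
    · funext a b c
      have key : starFun p (O₁ ∪ O₂) O₃ a b c = - starFun p O₃ I₃ a b c := by
        rw [← hI₃eq]; exact starFun_neg p O₃ I₃ a b c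
      rw [he₃ a b c, key]; ring

end CommonApex

section Exclusion

variable {V : Type*}

lemma cycleVal_eq_zero {f : V → V → V → ℤ} (h0 : ∀ a b c, f a b c = 0) (C : List V) :
    cycleVal f C = 0 := by
  cases C with
  | nil => simp [cycleVal]
  | cons v rest => simp [cycleVal, h0]

lemma sing_vanish {f : V → V → V → ℤ} {q x : V} {O I : Set V}
    (hr : IsStarPartition q O I) (he : ∀ a b c, f a b c = starFun q O I a b c)
    (hx : O = ({x} : Set V) ∨ I = ({x} : Set V)) :
    ∀ a b c, a ≠ x → b ≠ x → c ≠ x → f a b c = 0 := by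
  intro a b c ha hb hc
  rcases hx with h | h
  · subst h
    obtain ⟨hsp2, heq2⟩ := star_swap hr
    rw [he a b c, heq2 a b c]
    exact starFun_vanish ha hb hc
  · subst h
    obtain ⟨hsp2, heq2⟩ := star_swap' hr
    rw [he a b c, heq2 a b c]
    exact starFun_vanish ha hb hc

lemma A1_A2_false [Fintype V] {n : ℕ} (hV : Fintype.card V = n) {ε : ℤ}
    {f₁ f₂ f₃ : V → V → V → ℤ}
    (hA1 : ∃ (p : V) (I₁ I₂ I₃ : Set V),
      Disjoint I₁ I₂ ∧ Disjoint I₁ I₃ ∧ Disjoint I₂ I₃ ∧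
      I₁ ∪ I₂ ∪ I₃ = ({p} : Set V)ᶜ ∧
      ¬(I₁ = ∅ ∧ I₂ = ∅) ∧ ¬(I₁ = ∅ ∧ I₃ = ∅) ∧ ¬(I₂ = ∅ ∧ I₃ = ∅) ∧
      (fun a b c => ε * f₁ a b c) = starFun p (I₂ ∪ I₃) I₁ ∧
      (fun a b c => ε * f₂ a b c) = starFun p (I₁ ∪ I₃) I₂ ∧
      (fun a b c => ε * f₃ a b c) = starFun p (I₁ ∪ I₂) I₃)
    (hA2 : 5 ≤ n ∧ ∃ p₁ p₂ p₃ : V, p₁ ≠ p₂ ∧ p₁ ≠ p₃ ∧ p₂ ≠ p₃ ∧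
      (fun a b c => ε * f₁ a b c) =
        starFun p₁ ({p₂, p₃} : Set V) (({p₁, p₂, p₃} : Set V)ᶜ) ∧
      (fun a b c => ε * f₂ a b c) =
        starFun p₂ ({p₁, p₃} : Set V) (({p₁, p₂, p₃} : Set V)ᶜ) ∧
      (fun a b c => ε * f₃ a b c) =
        starFun p₃ ({p₁, p₂} : Set V) (({p₁, p₂, p₃} : Set V)ᶜ)) : False := by
  obtain ⟨p, I₁, I₂, I₃, -, -, -, -, -, -, -, heq1, heq2, heq3⟩ := hA1
  obtain ⟨hn5, p₁, p₂, p₃, h12, h13, h23, heq1', heq2', heq3'⟩ := hA2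
  have hy : ∃ y : V, y ∉ ({p₁, p₂, p₃, p} : Finset V) := by
    by_contra hcon
    push_neg at hcon
    have hsub : (Finset.univ : Finset V) ⊆ {p₁, p₂, p₃, p} := fun x _ => hcon x
    have hc := Finset.card_le_card hsub
    rw [Finset.card_univ, hV] at hc
    have h4 : ({p₁, p₂, p₃, p} : Finset V).card ≤ 4 := by
      apply (Finset.card_insert_le _ _).trans
      apply Nat.succ_le_succ
      apply (Finset.card_insert_le _ _).trans
      apply Nat.succ_le_succ
      apply (Finset.card_insert_le _ _).trans
      simp
    omega
  obtain ⟨y, hy⟩ := hy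
  simp only [Finset.mem_insert, Finset.mem_singleton, not_or] at hy
  obtain ⟨hy1, hy2, hy3, hyp⟩ := hy
  have hyC : y ∈ (({p₁, p₂, p₃} : Set V))ᶜ := by
    simp [hy1, hy2, hy3]
  have hdisj : Disjoint ({p₂, p₃} : Set V) (({p₁, p₂, p₃} : Set V)ᶜ) := by
    rw [Set.disjoint_left]
    intro x hx hx'
    apply hx'
    simp only [Set.mem_insert_iff, Set.mem_singleton_iff] at hx ⊢
    tauto
  have hdisj2 : Disjoint ({p₁, p₃} : Set V) (({p₁, p₂, p₃} : Set V)ᶜ) := by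
    rw [Set.disjoint_left]
    intro x hx hx'
    apply hx'
    simp only [Set.mem_insert_iff, Set.mem_singleton_iff] at hx ⊢
    tauto
  by_cases hp1 : p₁ = p
  · -- use f₂ : apex p₂ ≠ p
    have hp2 : p₂ ≠ p := fun h => h12 (hp1.trans h.symm)
    have hp3 : p₃ ≠ p := fun h => h13 (hp1.trans h.symm)
    refine eval_clash heq2 heq2' hp2 hp3 hyp ?_ ?_ hdisj2 ?_ hyC
    · simp only [Set.mem_insert_iff, Set.mem_singleton_iff]
      push_neg
      exact ⟨Ne.symm h12, h23⟩
    · simp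
    · simp
  · -- use f₁ : apex p₁ ≠ p
    have ho : ∃ o, o ∈ ({p₂, p₃} : Set V) ∧ o ≠ p ∧ o ≠ p₁ := by
      by_cases hp2 : p₂ = p
      · have hp3 : p₃ ≠ p := fun h => h23 (hp2.trans h.symm)
        exact ⟨p₃, by simp, hp3, Ne.symm h13⟩
      · exact ⟨p₂, by simp, hp2, Ne.symm h12⟩
    obtain ⟨o, hoP, hop, hop1⟩ := ho
    refine eval_clash heq1 heq1' hp1 hop hyp ?_ ?_ hdisj hoP hyC
    · simp only [Set.mem_insert_iff, Set.mem_singleton_iff]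
      push_neg
      exact ⟨h12, h13⟩
    · simp
  
lemma distinct_apex_case [Fintype V] {n : ℕ} (hV : Fintype.card V = n)
    {f₁ f₂ f₃ : V → V → V → ℤ} {q₁ O₁ I₁ q₂ O₂ I₂ q₃ O₃ I₃}
    (hsum : ∀ a b c, f₁ a b c + f₂ a b c + f₃ a b c = 0)
    (hr₁ : IsStarPartition q₁ O₁ I₁) (he₁ : ∀ a b c, f₁ a b c = starFun q₁ O₁ I₁ a b c)
    (hr₂ : IsStarPartition q₂ O₂ I₂) (he₂ : ∀ a b c, f₂ a b c = starFun q₂ O₂ I₂ a b c)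
    (hr₃ : IsStarPartition q₃ O₃ I₃) (he₃ : ∀ a b c, f₃ a b c = starFun q₃ O₃ I₃ a b c)
    (hno : ∀ v, (∀ a b c, a ≠ v → b ≠ v → c ≠ v → f₁ a b c = 0) →
           (∀ a b c, a ≠ v → b ≠ v → c ≠ v → f₂ a b c = 0) →
           (∀ a b c, a ≠ v → b ≠ v → c ≠ v → f₃ a b c = 0) → False) :
    ∃ ε : ℤ, (ε = 1 ∨ ε = -1) ∧
      (5 ≤ n ∧ ∃ p₁ p₂ p₃ : V, p₁ ≠ p₂ ∧ p₁ ≠ p₃ ∧ p₂ ≠ p₃ ∧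
        (fun a b c => ε * f₁ a b c) =
          starFun p₁ ({p₂, p₃} : Set V) (({p₁, p₂, p₃} : Set V)ᶜ) ∧
        (fun a b c => ε * f₂ a b c) =
          starFun p₂ ({p₁, p₃} : Set V) (({p₁, p₂, p₃} : Set V)ᶜ) ∧
        (fun a b c => ε * f₃ a b c) =
          starFun p₃ ({p₁, p₂} : Set V) (({p₁, p₂, p₃} : Set V)ᶜ)) := by
  have hv₁ : ∀ a b c, a ≠ q₁ → b ≠ q₁ → c ≠ q₁ → f₁ a b c = 0 := fun a b c ha hb hc =>
    (he₁ a b c).trans (starFun_vanish ha hb hc)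
  have hv₂ : ∀ a b c, a ≠ q₂ → b ≠ q₂ → c ≠ q₂ → f₂ a b c = 0 := fun a b c ha hb hc =>
    (he₂ a b c).trans (starFun_vanish ha hb hc)
  have hv₃ : ∀ a b c, a ≠ q₃ → b ≠ q₃ → c ≠ q₃ → f₃ a b c = 0 := fun a b c ha hb hc =>
    (he₃ a b c).trans (starFun_vanish ha hb hc)
  have hq12 : q₁ ≠ q₂ := by
    intro h
    subst h
    refine hno q₁ hv₁ hv₂ (fun a b c ha hb hc => ?_)
    have := hsum a b c
    rw [hv₁ a b c ha hb hc, hv₂ a b c ha hb hc] at this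
    omega
  have hq13 : q₁ ≠ q₃ := by
    intro h
    subst h
    refine hno q₁ hv₁ (fun a b c ha hb hc => ?_) hv₃
    have := hsum a b c
    rw [hv₁ a b c ha hb hc, hv₃ a b c ha hb hc] at this
    omega
  have hq23 : q₂ ≠ q₃ := by
    intro h
    subst h
    refine hno q₂ (fun a b c ha hb hc => ?_) hv₂ hv₃
    have := hsum a b c
    rw [hv₂ a b c ha hb hc, hv₃ a b c ha hb hc] at this
    omega
  have hsum213 : ∀ a b c, f₂ a b c + f₁ a b c + f₃ a b c = 0 := fun a b c => by
    have := hsum a b c; omega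
  have hsum312 : ∀ a b c, f₃ a b c + f₁ a b c + f₂ a b c = 0 := fun a b c => by
    have := hsum a b c; omega
  have hside₁ := side_analysis hsum hr₁ he₁ hv₂ hv₃ hq12 hq13
    (fun v a b d => hno v a b d)
  have hside₂ := side_analysis hsum213 hr₂ he₂ hv₁ hv₃ (Ne.symm hq12) hq23
    (fun v a b d => hno v b a d)
  have hside₃ := side_analysis hsum312 hr₃ he₃ hv₁ hv₂ (Ne.symm hq13) (Ne.symm hq23)
    (fun v a b d => hno v b d a)
  have hset2 : ({q₂, q₁, q₃} : Set V) = ({q₁, q₂, q₃} : Set V) := by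
    ext v; simp only [Set.mem_insert_iff, Set.mem_singleton_iff]; tauto
  have hset3 : ({q₃, q₁, q₂} : Set V) = ({q₁, q₂, q₃} : Set V) := by
    ext v; simp only [Set.mem_insert_iff, Set.mem_singleton_iff]; tauto
  rw [hset2] at hside₂
  rw [hset3] at hside₃
  set T : Set V := (({q₁, q₂, q₃} : Set V))ᶜ with hT
  -- T is nonempty
  have hTne : T.Nonempty := by
    rcases hside₁ with ⟨h1, h2⟩ | ⟨h1, h2⟩
    · exact h2 ▸ hr₁.2.1
    · exact h2 ▸ hr₁.1
  obtain ⟨x, hxT⟩ := hTne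
  have hxq : x ≠ q₁ ∧ x ≠ q₂ ∧ x ≠ q₃ := by
    have := hxT
    simp only [hT, Set.mem_compl_iff, Set.mem_insert_iff, Set.mem_singleton_iff,
      not_or] at this
    exact this
  -- T has a second element
  have hy : ∃ y ∈ T, y ≠ x := by
    by_contra hcon
    push_neg at hcon
    have hTx : T = ({x} : Set V) := by
      ext v
      simp only [Set.mem_singleton_iff]
      exact ⟨fun h => hcon v h, fun h => h ▸ hxT⟩
    apply hno x
    · refine sing_vanish hr₁ he₁ ?_
      rcases hside₁ with ⟨h1, h2⟩ | ⟨h1, h2⟩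
      · exact Or.inr (h2.trans hTx)
      · exact Or.inl (h2.trans hTx)
    · refine sing_vanish hr₂ he₂ ?_
      rcases hside₂ with ⟨h1, h2⟩ | ⟨h1, h2⟩
      · exact Or.inr (h2.trans hTx)
      · exact Or.inl (h2.trans hTx)
    · refine sing_vanish hr₃ he₃ ?_
      rcases hside₃ with ⟨h1, h2⟩ | ⟨h1, h2⟩
      · exact Or.inr (h2.trans hTx)
      · exact Or.inl (h2.trans hTx)
  obtain ⟨y, hyT, hyx⟩ := hy
  have hyq : y ≠ q₁ ∧ y ≠ q₂ ∧ y ≠ q₃ := by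
    have := hyT
    simp only [hT, Set.mem_compl_iff, Set.mem_insert_iff, Set.mem_singleton_iff,
      not_or] at this
    exact this
  have hn5 : 5 ≤ n := by
    have hcard : ({y, x, q₁, q₂, q₃} : Finset V).card = 5 := by
      rw [Finset.card_insert_of_notMem (by simp [hyx, hyq.1, hyq.2.1, hyq.2.2]),
        Finset.card_insert_of_notMem (by simp [hxq.1, hxq.2.1, hxq.2.2]),
        Finset.card_insert_of_notMem (by simp [hq12, hq13]),
        Finset.card_insert_of_notMem (by simp [hq23]),
        Finset.card_singleton]
    have := Finset.card_le_univ ({y, x, q₁, q₂, q₃} : Finset V)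
    rw [hcard, hV] at this
    exact this
  -- no mixed orientations
  have hmix12 : ¬((O₁ = ({q₂, q₃} : Set V) ∧ I₁ = T) ∧ (I₂ = ({q₁, q₃} : Set V) ∧ O₂ = T)) := by
    rintro ⟨⟨hO1, hI1⟩, ⟨hI2, hO2⟩⟩
    refine mixed_contra (y := x) hsum he₁ he₂ hr₁.2.2.1 hr₁.2.2.2.1 hr₂.2.2.1 hr₂.2.2.2.1
      hr₁.2.2.2.2.1 hr₂.2.2.2.2.1 ?_ ?_ ?_ ?_ hq12 ?_ ?_ hv₃ hq13 hq23 ?_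
    · rw [hO1]; simp
    · rw [hI1]; exact hxT
    · rw [hI2]; simp
    · rw [hO2]; exact hxT
    · exact hxq.1
    · exact hxq.2.1
    · exact hxq.2.2
  have hmix21 : ¬((O₂ = ({q₁, q₃} : Set V) ∧ I₂ = T) ∧ (I₁ = ({q₂, q₃} : Set V) ∧ O₁ = T)) := by
    rintro ⟨⟨hO1, hI1⟩, ⟨hI2, hO2⟩⟩
    refine mixed_contra (y := x) hsum213 he₂ he₁ hr₂.2.2.1 hr₂.2.2.2.1 hr₁.2.2.1 hr₁.2.2.2.1
      hr₂.2.2.2.2.1 hr₁.2.2.2.2.1 ?_ ?_ ?_ ?_ (Ne.symm hq12) ?_ ?_ hv₃ hq23 hq13 ?_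
    · rw [hO1]; simp
    · rw [hI1]; exact hxT
    · rw [hI2]; simp
    · rw [hO2]; exact hxT
    · exact hxq.2.1
    · exact hxq.1
    · exact hxq.2.2
  have hmix13 : ¬((O₁ = ({q₂, q₃} : Set V) ∧ I₁ = T) ∧ (I₃ = ({q₁, q₂} : Set V) ∧ O₃ = T)) := by
    rintro ⟨⟨hO1, hI1⟩, ⟨hI2, hO2⟩⟩
    refine mixed_contra (y := x) (f := f₁) (g := f₃) (h := f₂)
      (fun a b c => by have := hsum a b c; omega) he₁ he₃
      hr₁.2.2.1 hr₁.2.2.2.1 hr₃.2.2.1 hr₃.2.2.2.1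
      hr₁.2.2.2.2.1 hr₃.2.2.2.2.1 ?_ ?_ ?_ ?_ hq13 ?_ ?_ hv₂ hq12 (Ne.symm hq23) ?_
    · rw [hO1]; simp
    · rw [hI1]; exact hxT
    · rw [hI2]; simp
    · rw [hO2]; exact hxT
    · exact hxq.1
    · exact hxq.2.2
    · exact hxq.2.1
  have hmix31 : ¬((O₃ = ({q₁, q₂} : Set V) ∧ I₃ = T) ∧ (I₁ = ({q₂, q₃} : Set V) ∧ O₁ = T)) := by
    rintro ⟨⟨hO1, hI1⟩, ⟨hI2, hO2⟩⟩
    refine mixed_contra (y := x) (f := f₃) (g := f₁) (h := f₂)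
      (fun a b c => by have := hsum a b c; omega) he₃ he₁
      hr₃.2.2.1 hr₃.2.2.2.1 hr₁.2.2.1 hr₁.2.2.2.1
      hr₃.2.2.2.2.1 hr₁.2.2.2.2.1 ?_ ?_ ?_ ?_ (Ne.symm hq13) ?_ ?_ hv₂ (Ne.symm hq23) hq12 ?_
    · rw [hO1]; simp
    · rw [hI1]; exact hxT
    · rw [hI2]; simp
    · rw [hO2]; exact hxT
    · exact hxq.2.2
    · exact hxq.1
    · exact hxq.2.1
  have hmix23 : ¬((O₂ = ({q₁, q₃} : Set V) ∧ I₂ = T) ∧ (I₃ = ({q₁, q₂} : Set V) ∧ O₃ = T)) := by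
    rintro ⟨⟨hO1, hI1⟩, ⟨hI2, hO2⟩⟩
    refine mixed_contra (y := x) (f := f₂) (g := f₃) (h := f₁)
      (fun a b c => by have := hsum a b c; omega) he₂ he₃
      hr₂.2.2.1 hr₂.2.2.2.1 hr₃.2.2.1 hr₃.2.2.2.1
      hr₂.2.2.2.2.1 hr₃.2.2.2.2.1 ?_ ?_ ?_ ?_ hq23 ?_ ?_ hv₁ (Ne.symm hq12) (Ne.symm hq13) ?_
    · rw [hO1]; simp
    · rw [hI1]; exact hxT
    · rw [hI2]; simp
    · rw [hO2]; exact hxT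
    · exact hxq.2.1
    · exact hxq.2.2
    · exact hxq.1
  have hmix32 : ¬((O₃ = ({q₁, q₂} : Set V) ∧ I₃ = T) ∧ (I₂ = ({q₁, q₃} : Set V) ∧ O₂ = T)) := by
    rintro ⟨⟨hO1, hI1⟩, ⟨hI2, hO2⟩⟩
    refine mixed_contra (y := x) (f := f₃) (g := f₂) (h := f₁)
      (fun a b c => by have := hsum a b c; omega) he₃ he₂
      hr₃.2.2.1 hr₃.2.2.2.1 hr₂.2.2.1 hr₂.2.2.2.1
      hr₃.2.2.2.2.1 hr₂.2.2.2.2.1 ?_ ?_ ?_ ?_ (Ne.symm hq23) ?_ ?_ hv₁ (Ne.symm hq13) (Ne.symm hq12) ?_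
    · rw [hO1]; simp
    · rw [hI1]; exact hxT
    · rw [hI2]; simp
    · rw [hO2]; exact hxT
    · exact hxq.2.2
    · exact hxq.2.1
    · exact hxq.1
  rcases hside₁ with hs₁ | hs₁ <;> rcases hside₂ with hs₂ | hs₂ <;>
    rcases hside₃ with hs₃ | hs₃
  · -- all O-type : ε = 1
    refine ⟨1, Or.inl rfl, hn5, q₁, q₂, q₃, hq12, hq13, hq23, ?_, ?_, ?_⟩
    · funext a b c; rw [one_mul, he₁ a b c, hs₁.1, hs₁.2]
    · funext a b c; rw [one_mul, he₂ a b c, hs₂.1, hs₂.2]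
    · funext a b c; rw [one_mul, he₃ a b c, hs₃.1, hs₃.2]
  · exact absurd ⟨hs₂, hs₃⟩ hmix23
  · exact absurd ⟨hs₁, hs₂⟩ hmix12
  · exact absurd ⟨hs₁, hs₂⟩ hmix12
  · exact absurd ⟨hs₂, hs₁⟩ hmix21
  · exact absurd ⟨hs₂, hs₁⟩ hmix21
  · exact absurd ⟨hs₃, hs₁⟩ hmix31
  · -- all I-type : ε = -1
    refine ⟨-1, Or.inr rfl, hn5, q₁, q₂, q₃, hq12, hq13, hq23, ?_, ?_, ?_⟩
    · funext a b c
      have key : starFun q₁ ({q₂, q₃} : Set V) T a b c = - starFun q₁ O₁ I₁ a b c := by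
        rw [← hs₁.1, ← hs₁.2]; exact starFun_neg q₁ O₁ I₁ a b c
      rw [he₁ a b c, key]; ring
    · funext a b c
      have key : starFun q₂ ({q₁, q₃} : Set V) T a b c = - starFun q₂ O₂ I₂ a b c := by
        rw [← hs₂.1, ← hs₂.2]; exact starFun_neg q₂ O₂ I₂ a b c
      rw [he₂ a b c, key]; ring
    · funext a b c
      have key : starFun q₃ ({q₁, q₂} : Set V) T a b c = - starFun q₃ O₃ I₃ a b c := by
        rw [← hs₃.1, ← hs₃.2]; exact starFun_neg q₃ O₃ I₃ a b c
      rw [he₃ a b c, key]; ring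

end Exclusion


/-- the theta-curve theorem (combinatorial form). -/
theorem theta_curve {V : Type*} [Fintype V] (n : ℕ) (hn : 3 ≤ n)
    (hV : Fintype.card V = n)
    (f₁ f₂ f₃ : V → V → V → ℤ)
    (hlin₁ : IsLinkingFun f₁) (hlin₂ : IsLinkingFun f₂) (hlin₃ : IsLinkingFun f₃)
    (hweak₁ : IsWeak f₁) (hweak₂ : IsWeak f₂) (hweak₃ : IsWeak f₃)
    (hsum : ∀ a b c, f₁ a b c + f₂ a b c + f₃ a b c = 0)
    (hnt : IsNontrivial f₁ ∨ IsNontrivial f₂ ∨ IsNontrivial f₃) :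
    ∃ ε : ℤ, (ε = 1 ∨ ε = -1) ∧
      Xor'
        -- (A1): common apex case
        (∃ (p : V) (I₁ I₂ I₃ : Set V),
          Disjoint I₁ I₂ ∧ Disjoint I₁ I₃ ∧ Disjoint I₂ I₃ ∧
          I₁ ∪ I₂ ∪ I₃ = ({p} : Set V)ᶜ ∧
          ¬(I₁ = ∅ ∧ I₂ = ∅) ∧ ¬(I₁ = ∅ ∧ I₃ = ∅) ∧ ¬(I₂ = ∅ ∧ I₃ = ∅) ∧
          (fun a b c => ε * f₁ a b c) = starFun p (I₂ ∪ I₃) I₁ ∧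
          (fun a b c => ε * f₂ a b c) = starFun p (I₁ ∪ I₃) I₂ ∧
          (fun a b c => ε * f₃ a b c) = starFun p (I₁ ∪ I₂) I₃)
        -- (A2): no common apex case
        (5 ≤ n ∧ ∃ p₁ p₂ p₃ : V, p₁ ≠ p₂ ∧ p₁ ≠ p₃ ∧ p₂ ≠ p₃ ∧
          (fun a b c => ε * f₁ a b c) =
            starFun p₁ ({p₂, p₃} : Set V) (({p₁, p₂, p₃} : Set V)ᶜ) ∧
          (fun a b c => ε * f₂ a b c) =
            starFun p₂ ({p₁, p₃} : Set V) (({p₁, p₂, p₃} : Set V)ᶜ) ∧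
          (fun a b c => ε * f₃ a b c) =
            starFun p₃ ({p₁, p₂} : Set V) (({p₁, p₂, p₃} : Set V)ᶜ)) := by

  classical
  have hrep : ∀ f : V → V → V → ℤ, IsLinkingFun f → IsWeak f →
      (∀ a b c, f a b c = 0) ∨ ∃ (p : V) (O I : Set V), IsStarPartition p O I ∧
        ∀ a b c, f a b c = starFun p O I a b c := by
    intro f hf hwf
    by_cases h : IsNontrivial f
    · exact Or.inr (part1 hf hwf h)
    · exact Or.inl (zero_of_trivial hf.1 h)
  have hntz : ∀ f : V → V → V → ℤ, (∀ a b c, f a b c = 0) → ¬ IsNontrivial f := by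
    rintro f h ⟨C, hC, hval⟩
    exact hval (cycleVal_eq_zero h C)
  rcases hrep f₁ hlin₁ hweak₁ with hz₁ | ⟨p₁, O₁, I₁, hr₁, he₁⟩
  · rcases hrep f₂ hlin₂ hweak₂ with hz₂ | ⟨p, O, I, hr, he⟩
    · exfalso
      have hz₃ : ∀ a b c, f₃ a b c = 0 := by
        intro a b c
        have := hsum a b c
        rw [hz₁ a b c, hz₂ a b c] at this
        omega
      rcases hnt with h | h | h
      · exact hntz f₁ hz₁ h
      · exact hntz f₂ hz₂ h
      · exact hntz f₃ hz₃ h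
    · -- f₁ = 0, f₂ is a star, f₃ = -f₂
      obtain ⟨hOne, hIne, hpO, hpI, hd, hcov⟩ := hr
      have hOIc : O ∪ I = ({p} : Set V)ᶜ := by
        ext v
        simp only [Set.mem_union, Set.mem_compl_iff, Set.mem_singleton_iff]
        constructor
        · rintro (h' | h') h''
          · exact hpO (h'' ▸ h')
          · exact hpI (h'' ▸ h')
        · intro h'
          exact (cover_mem hcov v).resolve_left h'
      have hA1 : ∃ (p' : V) (J₁ J₂ J₃ : Set V),
          Disjoint J₁ J₂ ∧ Disjoint J₁ J₃ ∧ Disjoint J₂ J₃ ∧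
          J₁ ∪ J₂ ∪ J₃ = ({p'} : Set V)ᶜ ∧
          ¬(J₁ = ∅ ∧ J₂ = ∅) ∧ ¬(J₁ = ∅ ∧ J₃ = ∅) ∧ ¬(J₂ = ∅ ∧ J₃ = ∅) ∧
          (fun a b c => (1:ℤ) * f₁ a b c) = starFun p' (J₂ ∪ J₃) J₁ ∧
          (fun a b c => (1:ℤ) * f₂ a b c) = starFun p' (J₁ ∪ J₃) J₂ ∧
          (fun a b c => (1:ℤ) * f₃ a b c) = starFun p' (J₁ ∪ J₂) J₃ := by
        refine ⟨p, ∅, I, O, by simp, by simp, hd.symm, ?_, ?_, ?_, ?_, ?_, ?_, ?_⟩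
        · rw [Set.empty_union, Set.union_comm]; exact hOIc
        · exact fun h' => (Set.nonempty_iff_ne_empty.mp hIne) h'.2
        · exact fun h' => (Set.nonempty_iff_ne_empty.mp hOne) h'.2
        · exact fun h' => (Set.nonempty_iff_ne_empty.mp hIne) h'.1
        · funext a b c
          rw [one_mul, hz₁ a b c]
          exact (starFun_empty p (I ∪ O) a b c).symm
        · funext a b c
          rw [one_mul, he a b c, Set.empty_union]
        · funext a b c
          rw [one_mul, Set.empty_union]
          have h2 := starFun_neg p O I a b c
          have h3 := he a b c
          have h4 := hsum a b c
          have h5 := hz₁ a b c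
          omega
      exact ⟨1, Or.inl rfl, Or.inl ⟨hA1, fun hA2 => A1_A2_false hV hA1 hA2⟩⟩
  · rcases hrep f₂ hlin₂ hweak₂ with hz₂ | ⟨p₂, O₂, I₂, hr₂, he₂⟩
    · -- f₂ = 0, f₁ is a star, f₃ = -f₁
      obtain ⟨hOne, hIne, hpO, hpI, hd, hcov⟩ := hr₁
      have hOIc : O₁ ∪ I₁ = ({p₁} : Set V)ᶜ := by
        ext v
        simp only [Set.mem_union, Set.mem_compl_iff, Set.mem_singleton_iff]
        constructor
        · rintro (h' | h') h''
          · exact hpO (h'' ▸ h')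
          · exact hpI (h'' ▸ h')
        · intro h'
          exact (cover_mem hcov v).resolve_left h'
      have hA1 : ∃ (p' : V) (J₁ J₂ J₃ : Set V),
          Disjoint J₁ J₂ ∧ Disjoint J₁ J₃ ∧ Disjoint J₂ J₃ ∧
          J₁ ∪ J₂ ∪ J₃ = ({p'} : Set V)ᶜ ∧
          ¬(J₁ = ∅ ∧ J₂ = ∅) ∧ ¬(J₁ = ∅ ∧ J₃ = ∅) ∧ ¬(J₂ = ∅ ∧ J₃ = ∅) ∧
          (fun a b c => (1:ℤ) * f₁ a b c) = starFun p' (J₂ ∪ J₃) J₁ ∧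
          (fun a b c => (1:ℤ) * f₂ a b c) = starFun p' (J₁ ∪ J₃) J₂ ∧
          (fun a b c => (1:ℤ) * f₃ a b c) = starFun p' (J₁ ∪ J₂) J₃ := by
        refine ⟨p₁, I₁, ∅, O₁, by simp, hd.symm, by simp, ?_, ?_, ?_, ?_, ?_, ?_, ?_⟩
        · rw [Set.union_empty, Set.union_comm]; exact hOIc
        · exact fun h' => (Set.nonempty_iff_ne_empty.mp hIne) h'.1
        · exact fun h' => (Set.nonempty_iff_ne_empty.mp hIne) h'.1
        · exact fun h' => (Set.nonempty_iff_ne_empty.mp hOne) h'.2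
        · funext a b c
          rw [one_mul, he₁ a b c, Set.empty_union]
        · funext a b c
          rw [one_mul, hz₂ a b c, Set.union_comm]
          exact (starFun_empty p₁ (O₁ ∪ I₁) a b c).symm
        · funext a b c
          rw [one_mul, Set.union_empty]
          have h2 := starFun_neg p₁ O₁ I₁ a b c
          have h3 := he₁ a b c
          have h4 := hsum a b c
          have h5 := hz₂ a b c
          omega
      exact ⟨1, Or.inl rfl, Or.inl ⟨hA1, fun hA2 => A1_A2_false hV hA1 hA2⟩⟩
    · rcases hrep f₃ hlin₃ hweak₃ with hz₃ | ⟨p₃, O₃, I₃, hr₃, he₃⟩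
      · -- f₃ = 0, f₂ = -f₁
        obtain ⟨hOne, hIne, hpO, hpI, hd, hcov⟩ := hr₁
        have hOIc : O₁ ∪ I₁ = ({p₁} : Set V)ᶜ := by
          ext v
          simp only [Set.mem_union, Set.mem_compl_iff, Set.mem_singleton_iff]
          constructor
          · rintro (h' | h') h''
            · exact hpO (h'' ▸ h')
            · exact hpI (h'' ▸ h')
          · intro h'
            exact (cover_mem hcov v).resolve_left h'
        have hA1 : ∃ (p' : V) (J₁ J₂ J₃ : Set V),
            Disjoint J₁ J₂ ∧ Disjoint J₁ J₃ ∧ Disjoint J₂ J₃ ∧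
            J₁ ∪ J₂ ∪ J₃ = ({p'} : Set V)ᶜ ∧
            ¬(J₁ = ∅ ∧ J₂ = ∅) ∧ ¬(J₁ = ∅ ∧ J₃ = ∅) ∧ ¬(J₂ = ∅ ∧ J₃ = ∅) ∧
            (fun a b c => (1:ℤ) * f₁ a b c) = starFun p' (J₂ ∪ J₃) J₁ ∧
            (fun a b c => (1:ℤ) * f₂ a b c) = starFun p' (J₁ ∪ J₃) J₂ ∧
            (fun a b c => (1:ℤ) * f₃ a b c) = starFun p' (J₁ ∪ J₂) J₃ := by
          refine ⟨p₁, I₁, O₁, ∅, hd.symm, by simp, by simp, ?_, ?_, ?_, ?_, ?_, ?_, ?_⟩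
          · rw [Set.union_empty, Set.union_comm]; exact hOIc
          · exact fun h' => (Set.nonempty_iff_ne_empty.mp hIne) h'.1
          · exact fun h' => (Set.nonempty_iff_ne_empty.mp hIne) h'.1
          · exact fun h' => (Set.nonempty_iff_ne_empty.mp hOne) h'.1
          · funext a b c
            rw [one_mul, he₁ a b c, Set.union_empty]
          · funext a b c
            rw [one_mul, Set.union_empty]
            have h2 := starFun_neg p₁ O₁ I₁ a b c
            have h3 := he₁ a b c
            have h4 := hsum a b c
            have h5 := hz₃ a b c
            omega
          · funext a b c
            rw [one_mul, hz₃ a b c]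
            exact (starFun_empty p₁ (I₁ ∪ O₁) a b c).symm
        exact ⟨1, Or.inl rfl, Or.inl ⟨hA1, fun hA2 => A1_A2_false hV hA1 hA2⟩⟩
      · -- all three are stars
        by_cases hvan : ∃ v : V, (∀ a b c, a ≠ v → b ≠ v → c ≠ v → f₁ a b c = 0) ∧
            (∀ a b c, a ≠ v → b ≠ v → c ≠ v → f₂ a b c = 0) ∧
            (∀ a b c, a ≠ v → b ≠ v → c ≠ v → f₃ a b c = 0)
        · obtain ⟨v, hv1, hv2, hv3⟩ := hvan
          obtain ⟨O₁', I₁', hr₁', heq₁⟩ := apex_align hr₁ v (fun a b c ha hb hc => by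
            rw [← he₁ a b c]; exact hv1 a b c ha hb hc)
          obtain ⟨O₂', I₂', hr₂', heq₂⟩ := apex_align hr₂ v (fun a b c ha hb hc => by
            rw [← he₂ a b c]; exact hv2 a b c ha hb hc)
          obtain ⟨O₃', I₃', hr₃', heq₃⟩ := apex_align hr₃ v (fun a b c ha hb hc => by
            rw [← he₃ a b c]; exact hv3 a b c ha hb hc)
          obtain ⟨ε, hε, hA1⟩ := common_apex_case hsum
            hr₁' (fun a b c => (he₁ a b c).trans (heq₁ a b c))
            hr₂' (fun a b c => (he₂ a b c).trans (heq₂ a b c))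
            hr₃' (fun a b c => (he₃ a b c).trans (heq₃ a b c))
          exact ⟨ε, hε, Or.inl ⟨hA1, fun hA2 => A1_A2_false hV hA1 hA2⟩⟩
        · push_neg at hvan
          have hno : ∀ v : V, (∀ a b c, a ≠ v → b ≠ v → c ≠ v → f₁ a b c = 0) →
              (∀ a b c, a ≠ v → b ≠ v → c ≠ v → f₂ a b c = 0) →
              (∀ a b c, a ≠ v → b ≠ v → c ≠ v → f₃ a b c = 0) → False := by
            intro v h1 h2 h3
            obtain ⟨a, b, c, ha, hb, hc, hne⟩ := hvan v h1 h2
            exact hne (h3 a b c ha hb hc)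
          obtain ⟨ε, hε, hA2⟩ :=
            distinct_apex_case hV hsum hr₁ he₁ hr₂ he₂ hr₃ he₃ hno
          exact ⟨ε, hε, Or.inr ⟨hA2, fun hA1 => A1_A2_false hV hA1 hA2⟩⟩
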